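/- Let g be a real Lie subalgebra of the skew-Hermitian 4×4 complex matrices containing iI₄, S_x, S_y and S_z. Suppose that for every F ∈ g and every v ∈ ℂ⁴, the function t ↦ τ̃(exp(tF)·v) is constant in t, where τ̃ is the three-tangle on the symmetric sector expressed in the orthonormal coordinates v = (v₀, v₁, v₂, v₃). Then g = span_ℝ{iI₄, S_x, S_y, S_z}. In other words, the Lie algebra of local symmetric transformations is maximal among Lie algebras whose flows leave the distributed tangle invariant on the symmetric sector. -/

import Mathlib

open Matrix Complex NormedSpace

noncomputable section

/-- S_x: the 4-dimensional irreducible representation of (i/2)σx. -/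
def Sx4 : Matrix (Fin 4) (Fin 4) ℂ :=
  (1/2 : ℂ) • !![0, (Real.sqrt 3 : ℂ) * I, 0, 0;
                 (Real.sqrt 3 : ℂ) * I, 0, 2 * I, 0;
                 0, 2 * I, 0, (Real.sqrt 3 : ℂ) * I;
                 0, 0, (Real.sqrt 3 : ℂ) * I, 0]

/-- S_y: the 4-dimensional irreducible representation of (i/2)σy. -/
def Sy4 : Matrix (Fin 4) (Fin 4) ℂ :=
  (1/2 : ℂ) • !![0, -(Real.sqrt 3 : ℂ), 0, 0;
                 (Real.sqrt 3 : ℂ), 0, -2, 0;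
                 0, 2, 0, -(Real.sqrt 3 : ℂ);
                 0, 0, (Real.sqrt 3 : ℂ), 0]

/-- S_z = (1/2)·diag(3i, i, −i, −3i). -/
def Sz4 : Matrix (Fin 4) (Fin 4) ℂ :=
  (1/2 : ℂ) • !![3 * I, 0, 0, 0; 0, I, 0, 0; 0, 0, -I, 0; 0, 0, 0, -3 * I]

/-- The three-tangle on the symmetric sector, in the orthonormal coordinates
v = (v₀,v₁,v₂,v₃) of the basis {φ₀, φ₁/√3, φ₂/√3, φ₃}: with c₀ = v₀, c₁ = v₁/√3,
c₂ = v₂/√3, c₃ = v₃ and X₂ = c₀c₂−c₁², X₃ = c₀c₃−c₁c₂, X₄ = c₁c₃−c₂²,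
τ̃(v) = 4|X₃² − 4X₂X₄|. -/
def tauTilde (v : Fin 4 → ℂ) : ℝ :=
  4 * ‖(
    ((v 0) * (v 3) - (v 1 / (Real.sqrt 3 : ℂ)) * (v 2 / (Real.sqrt 3 : ℂ))) ^ 2
    - 4 * ((v 0) * (v 2 / (Real.sqrt 3 : ℂ)) - (v 1 / (Real.sqrt 3 : ℂ)) ^ 2)
        * ((v 1 / (Real.sqrt 3 : ℂ)) * (v 3) - (v 2 / (Real.sqrt 3 : ℂ)) ^ 2))‖


/-! ### Auxiliary definitions and lemmas -/

def sC : ℂ := (Real.sqrt 3 : ℝ)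

def Qt (v : Fin 4 → ℂ) : ℂ :=
  (3*v 0*v 3 - v 1*v 2)*(3*v 0*v 3 - v 1*v 2)
  - 4*((sC*v 0*v 2 - v 1*v 1)*(sC*v 1*v 3 - v 2*v 2))

def DQt (F : Matrix (Fin 4) (Fin 4) ℂ) (v : Fin 4 → ℂ) : ℂ :=
  ((3*(F.mulVec v 0)*v 3 + 3*v 0*(F.mulVec v 3)) - ((F.mulVec v 1)*v 2 + v 1*(F.mulVec v 2)))
    *(3*v 0*v 3 - v 1*v 2)
  + (3*v 0*v 3 - v 1*v 2)
    *((3*(F.mulVec v 0)*v 3 + 3*v 0*(F.mulVec v 3)) - ((F.mulVec v 1)*v 2 + v 1*(F.mulVec v 2)))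
  - 4*(((sC*(F.mulVec v 0)*v 2 + sC*v 0*(F.mulVec v 2)) - (v 1*(F.mulVec v 1) + (F.mulVec v 1)*v 1))
        *(sC*v 1*v 3 - v 2*v 2)
      + (sC*v 0*v 2 - v 1*v 1)
        *((sC*(F.mulVec v 1)*v 3 + sC*v 1*(F.mulVec v 3)) - (v 2*(F.mulVec v 2) + (F.mulVec v 2)*v 2)))

lemma sC_mul_self : sC * sC = 3 := by
  rw [sC, ← Complex.ofReal_mul, Real.mul_self_sqrt (by norm_num)]
  norm_num

lemma sC_ne_zero : sC ≠ 0 := by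
  rw [sC, Ne, Complex.ofReal_eq_zero]
  positivity

lemma Qt_eq9 (v : Fin 4 → ℂ) :
    Qt v = 9 * (((v 0) * (v 3) - (v 1 / (Real.sqrt 3 : ℂ)) * (v 2 / (Real.sqrt 3 : ℂ))) ^ 2
      - 4 * ((v 0) * (v 2 / (Real.sqrt 3 : ℂ)) - (v 1 / (Real.sqrt 3 : ℂ)) ^ 2)
          * ((v 1 / (Real.sqrt 3 : ℂ)) * (v 3) - (v 2 / (Real.sqrt 3 : ℂ)) ^ 2)) := by
  have h3 := sC_mul_self
  have hne := sC_ne_zero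
  have hs' : ((Real.sqrt 3 : ℝ) : ℂ) = sC := rfl
  rw [Qt, hs']
  have e1 : v 1 / sC = sC * v 1 / 3 := by
    rw [div_eq_div_iff hne (by norm_num : (3:ℂ) ≠ 0)]
    linear_combination (-(v 1)) * h3
  have e2 : v 2 / sC = sC * v 2 / 3 := by
    rw [div_eq_div_iff hne (by norm_num : (3:ℂ) ≠ 0)]
    linear_combination (-(v 2)) * h3
  rw [e1, e2]
  ring_nf
  linear_combination (2*v 0*v 3*v 1*v 2 - (4/3)*sC*v 0*v 2^3 - (4/3)*sC*v 3*v 1^3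
    + (1/3)*(sC^2+3)*v 1^2*v 2^2) * h3

lemma absQt (v : Fin 4 → ℂ) : ‖Qt v‖ = 9/4 * tauTilde v := by
  rw [Qt_eq9, norm_mul, tauTilde]
  simp [Complex.norm_ofNat]
  ring

lemma key (F : Matrix (Fin 4) (Fin 4) ℂ)
    (hinvF : ∀ v : Fin 4 → ℂ, ∀ t : ℝ,
      ‖Qt ((NormedSpace.exp (t • F)).mulVec v)‖ = ‖Qt v‖)
    (v : Fin 4 → ℂ) :
    (Qt v).re * (DQt F v).re + (Qt v).im * (DQt F v).im = 0 := by
  letI : SeminormedRing (Matrix (Fin 4) (Fin 4) ℂ) := Matrix.linftyOpSemiNormedRing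
  letI : NormedRing (Matrix (Fin 4) (Fin 4) ℂ) := Matrix.linftyOpNormedRing
  letI : NormedAlgebra ℝ (Matrix (Fin 4) (Fin 4) ℂ) := Matrix.linftyOpNormedAlgebra
  letI : NormedAlgebra ℂ (Matrix (Fin 4) (Fin 4) ℂ) := Matrix.linftyOpNormedAlgebra
  have hexp : HasDerivAt (fun t : ℝ => NormedSpace.exp (t • F)) F 0 := by
    have := hasDerivAt_exp_smul_const (𝕂 := ℝ) F (0 : ℝ)
    simp at this
    exact this
  have hf : ∀ j, HasDerivAt (fun t : ℝ => (NormedSpace.exp (t • F)).mulVec v j) (F.mulVec v j) 0 := by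
    intro j
    let L : Matrix (Fin 4) (Fin 4) ℂ →ₗ[ℝ] ℂ :=
      { toFun := fun M => M.mulVec v j
        map_add' := by intro a b; simp [Matrix.add_mulVec]
        map_smul' := by intro c a; simp [Matrix.smul_mulVec] }
    have := (L.toContinuousLinearMap.hasFDerivAt
      (x := NormedSpace.exp ((0:ℝ) • F))).comp_hasDerivAt 0 hexp
    simp [L] at this
    exact this
  have hv0 : (NormedSpace.exp ((0:ℝ) • F)).mulVec v = v := by
    rw [zero_smul, NormedSpace.exp_zero, Matrix.one_mulVec]
  have hQ : HasDerivAt (fun t : ℝ => Qt ((NormedSpace.exp (t • F)).mulVec v)) (DQt F v) 0 := by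
    simp only [Qt]
    have hA : HasDerivAt
        (fun t : ℝ => 3*(NormedSpace.exp (t • F)).mulVec v 0*(NormedSpace.exp (t • F)).mulVec v 3
          - (NormedSpace.exp (t • F)).mulVec v 1*(NormedSpace.exp (t • F)).mulVec v 2)
        ((3*(F.mulVec v 0)*v 3 + 3*v 0*(F.mulVec v 3))
          - ((F.mulVec v 1)*v 2 + v 1*(F.mulVec v 2))) 0 := by
      have := (((hf 0).const_mul (3:ℂ)).mul (hf 3)).sub ((hf 1).mul (hf 2))
      rw [hv0] at this
      exact this.congr_deriv (by ring)
    have hB : HasDerivAt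
        (fun t : ℝ => sC*(NormedSpace.exp (t • F)).mulVec v 0*(NormedSpace.exp (t • F)).mulVec v 2
          - (NormedSpace.exp (t • F)).mulVec v 1*(NormedSpace.exp (t • F)).mulVec v 1)
        ((sC*(F.mulVec v 0)*v 2 + sC*v 0*(F.mulVec v 2))
          - (v 1*(F.mulVec v 1) + (F.mulVec v 1)*v 1)) 0 := by
      have := (((hf 0).const_mul sC).mul (hf 2)).sub ((hf 1).mul (hf 1))
      rw [hv0] at this
      exact this.congr_deriv (by ring)
    have hC : HasDerivAt
        (fun t : ℝ => sC*(NormedSpace.exp (t • F)).mulVec v 1*(NormedSpace.exp (t • F)).mulVec v 3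
          - (NormedSpace.exp (t • F)).mulVec v 2*(NormedSpace.exp (t • F)).mulVec v 2)
        ((sC*(F.mulVec v 1)*v 3 + sC*v 1*(F.mulVec v 3))
          - (v 2*(F.mulVec v 2) + (F.mulVec v 2)*v 2)) 0 := by
      have := (((hf 1).const_mul sC).mul (hf 3)).sub ((hf 2).mul (hf 2))
      rw [hv0] at this
      exact this.congr_deriv (by ring)
    have := (hA.mul hA).sub ((hB.mul hC).const_mul (4:ℂ))
    rw [hv0] at this
    exact this.congr_deriv (by simp only [DQt])
  have hre : HasDerivAt (fun t : ℝ => (Qt ((NormedSpace.exp (t • F)).mulVec v)).re) (DQt F v).re 0 :=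
    (Complex.reCLM.hasFDerivAt.comp_hasDerivAt 0 hQ)
  have him : HasDerivAt (fun t : ℝ => (Qt ((NormedSpace.exp (t • F)).mulVec v)).im) (DQt F v).im 0 :=
    (Complex.imCLM.hasFDerivAt.comp_hasDerivAt 0 hQ)
  have hns : HasDerivAt (fun t : ℝ => (Qt ((NormedSpace.exp (t • F)).mulVec v)).re
      * (Qt ((NormedSpace.exp (t • F)).mulVec v)).re
      + (Qt ((NormedSpace.exp (t • F)).mulVec v)).im * (Qt ((NormedSpace.exp (t • F)).mulVec v)).im)
      (2*((Qt v).re * (DQt F v).re + (Qt v).im * (DQt F v).im)) 0 := by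
    have := (hre.mul hre).add (him.mul him)
    rw [hv0] at this
    exact this.congr_deriv (by ring)
  have hconst : (fun t : ℝ => (Qt ((NormedSpace.exp (t • F)).mulVec v)).re
      * (Qt ((NormedSpace.exp (t • F)).mulVec v)).re
      + (Qt ((NormedSpace.exp (t • F)).mulVec v)).im * (Qt ((NormedSpace.exp (t • F)).mulVec v)).im)
      = fun _ : ℝ => Complex.normSq (Qt v) := by
    funext t
    have h1 : Complex.normSq (Qt ((NormedSpace.exp (t • F)).mulVec v)) = Complex.normSq (Qt v) := by
      have h2 := congrArg (fun x : ℝ => x^2) (hinvF v t)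
      simpa [Complex.sq_norm] using h2
    simpa [Complex.normSq_apply] using h1
  rw [hconst] at hns
  have := hns.unique (hasDerivAt_const 0 _)
  linarith

lemma hI1 : Complex.I • (1 : Matrix (Fin 4) (Fin 4) ℂ)
    = !![Complex.I,0,0,0; 0,Complex.I,0,0; 0,0,Complex.I,0; 0,0,0,Complex.I] := by
  funext i j
  fin_cases i <;> fin_cases j <;> simp [Matrix.one_apply, Matrix.vecHead, Matrix.vecTail]

lemma hSxE : Sx4 = !![0, (↑(Real.sqrt 3/2):ℂ)*Complex.I, 0, 0;
    (↑(Real.sqrt 3/2):ℂ)*Complex.I, 0, Complex.I, 0;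
    0, Complex.I, 0, (↑(Real.sqrt 3/2):ℂ)*Complex.I;
    0, 0, (↑(Real.sqrt 3/2):ℂ)*Complex.I, 0] := by
  funext i j
  fin_cases i <;> fin_cases j <;>
    simp [Sx4, Complex.ofReal_div, Matrix.vecHead, Matrix.vecTail] <;> try ring

lemma hSyE : Sy4 = !![0, -((↑(Real.sqrt 3/2):ℂ)), 0, 0;
    (↑(Real.sqrt 3/2):ℂ), 0, -1, 0;
    0, 1, 0, -((↑(Real.sqrt 3/2):ℂ));
    0, 0, (↑(Real.sqrt 3/2):ℂ), 0] := by
  funext i j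
  fin_cases i <;> fin_cases j <;>
    simp [Sy4, Complex.ofReal_div, Matrix.vecHead, Matrix.vecTail] <;> try ring

lemma hSzE : Sz4 = !![(↑((3:ℝ)/2):ℂ)*Complex.I, 0, 0, 0;
    0, (↑((1:ℝ)/2):ℂ)*Complex.I, 0, 0;
    0, 0, -((↑((1:ℝ)/2):ℂ)*Complex.I), 0;
    0, 0, 0, -((↑((3:ℝ)/2):ℂ)*Complex.I)] := by
  funext i j
  fin_cases i <;> fin_cases j <;>
    simp [Sz4, Complex.ofReal_div, Matrix.vecHead, Matrix.vecTail] <;> try ring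

set_option maxHeartbeats 2000000 in
/-- if g is a real Lie algebra of skew-Hermitian 4×4 matrices
containing iI₄, S_x, S_y, S_z, and every flow exp(tF), F ∈ g, leaves the distributed
tangle τ̃ invariant, then g = span_ℝ{iI₄, S_x, S_y, S_z}: the local symmetric Lie
algebra is maximal among Lie algebras leaving the three-tangle invariant. -/
theorem statement16 (g : Submodule ℝ (Matrix (Fin 4) (Fin 4) ℂ))
    (hskew : ∀ M ∈ g, Mᴴ = -M)
    (hlie : ∀ A ∈ g, ∀ B ∈ g, A * B - B * A ∈ g)
    (hI : Complex.I • (1 : Matrix (Fin 4) (Fin 4) ℂ) ∈ g)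
    (hx : Sx4 ∈ g) (hy : Sy4 ∈ g) (hz : Sz4 ∈ g)
    (hinv : ∀ F ∈ g, ∀ v : Fin 4 → ℂ, ∀ t : ℝ,
      tauTilde ((NormedSpace.exp (t • F)).mulVec v) = tauTilde v) :
    g = Submodule.span ℝ
      ({Complex.I • (1 : Matrix (Fin 4) (Fin 4) ℂ), Sx4, Sy4, Sz4} :
        Set (Matrix (Fin 4) (Fin 4) ℂ)) := by
  refine le_antisymm ?_ ?_
  · intro F hF
    have hsk : ∀ j k : Fin 4, (F k j).re = -(F j k).re ∧ (F k j).im = (F j k).im := by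
      intro j k
      have h := congrFun (congrFun (hskew F hF) j) k
      rw [Matrix.conjTranspose_apply, Matrix.neg_apply] at h
      constructor
      · have := congrArg Complex.re h
        simpa [Complex.star_def] using this
      · have := congrArg Complex.im h
        have h2 : -(F k j).im = -(F j k).im := by
          simpa [Complex.star_def] using this
        linarith
    have hQinv : ∀ v : Fin 4 → ℂ, ∀ t : ℝ,
        ‖Qt ((NormedSpace.exp (t • F)).mulVec v)‖ = ‖Qt v‖ := by
      intro v t
      rw [absQt, absQt, hinv F hF v t]
    have keyF := key F hQinv
    have hs : Real.sqrt 3 ^ 2 = 3 := Real.sq_sqrt (by norm_num)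
    have sk0 : 1*(F 0 0).re = 0 := by
      linear_combination (1/2) * (hsk 0 0).1
    have sk1 : 1*(F 1 1).re = 0 := by
      linear_combination (1/2) * (hsk 1 1).1
    have sk2 : 1*(F 2 2).re = 0 := by
      linear_combination (1/2) * (hsk 2 2).1
    have sk3 : 1*(F 3 3).re = 0 := by
      linear_combination (1/2) * (hsk 3 3).1
    have sk4 : 1*(F 0 1).re + 1*(F 1 0).re = 0 := by
      linear_combination (hsk 0 1).1
    have sk5 : -1*(F 0 1).im + 1*(F 1 0).im = 0 := by
      linear_combination (hsk 0 1).2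
    have sk6 : 1*(F 0 2).re + 1*(F 2 0).re = 0 := by
      linear_combination (hsk 0 2).1
    have sk7 : -1*(F 0 2).im + 1*(F 2 0).im = 0 := by
      linear_combination (hsk 0 2).2
    have sk8 : 1*(F 0 3).re + 1*(F 3 0).re = 0 := by
      linear_combination (hsk 0 3).1
    have sk9 : -1*(F 0 3).im + 1*(F 3 0).im = 0 := by
      linear_combination (hsk 0 3).2
    have sk10 : 1*(F 1 2).re + 1*(F 2 1).re = 0 := by
      linear_combination (hsk 1 2).1
    have sk11 : -1*(F 1 2).im + 1*(F 2 1).im = 0 := by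
      linear_combination (hsk 1 2).2
    have sk12 : 1*(F 1 3).re + 1*(F 3 1).re = 0 := by
      linear_combination (hsk 1 3).1
    have sk13 : -1*(F 1 3).im + 1*(F 3 1).im = 0 := by
      linear_combination (hsk 1 3).2
    have sk14 : 1*(F 2 3).re + 1*(F 3 2).re = 0 := by
      linear_combination (hsk 2 3).1
    have sk15 : -1*(F 2 3).im + 1*(F 3 2).im = 0 := by
      linear_combination (hsk 2 3).2
    have e4 : 16*Real.sqrt 3^2*(F 0 0).re + 16*Real.sqrt 3^2*(F 0 2).re + 48*Real.sqrt 3^2*(F 2 0).re + 48*Real.sqrt 3^2*(F 2 2).re = 0 := by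
      have h := keyF ![1, 0, 1, 0]
      simp only [Qt, DQt, sC, Matrix.mulVec, dotProduct, Fin.sum_univ_four,
        Matrix.cons_val_zero, Matrix.cons_val_one, Matrix.cons_val_two, Matrix.cons_val_three,
        Matrix.head_cons, Matrix.tail_cons, Matrix.head_fin_const,
        Complex.add_re, Complex.add_im, Complex.sub_re, Complex.sub_im,
        Complex.mul_re, Complex.mul_im, Complex.I_re, Complex.I_im,
        Complex.ofReal_re, Complex.ofReal_im, Complex.re_ofNat, Complex.im_ofNat,
        Complex.one_re, Complex.one_im, Complex.zero_re, Complex.zero_im,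
        Complex.neg_re, Complex.neg_im,
        mul_zero, zero_mul, mul_one, one_mul, add_zero, zero_add, sub_zero, zero_sub,
        neg_zero, mul_neg, neg_mul, neg_neg] at h
      linear_combination h
    have e5 : 16*Real.sqrt 3^2*(F 0 0).re + -16*Real.sqrt 3^2*(F 0 2).im + 48*Real.sqrt 3^2*(F 2 0).im + 48*Real.sqrt 3^2*(F 2 2).re = 0 := by
      have h := keyF ![1, 0, Complex.I, 0]
      simp only [Qt, DQt, sC, Matrix.mulVec, dotProduct, Fin.sum_univ_four,
        Matrix.cons_val_zero, Matrix.cons_val_one, Matrix.cons_val_two, Matrix.cons_val_three,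
        Matrix.head_cons, Matrix.tail_cons, Matrix.head_fin_const,
        Complex.add_re, Complex.add_im, Complex.sub_re, Complex.sub_im,
        Complex.mul_re, Complex.mul_im, Complex.I_re, Complex.I_im,
        Complex.ofReal_re, Complex.ofReal_im, Complex.re_ofNat, Complex.im_ofNat,
        Complex.one_re, Complex.one_im, Complex.zero_re, Complex.zero_im,
        Complex.neg_re, Complex.neg_im,
        mul_zero, zero_mul, mul_one, one_mul, add_zero, zero_add, sub_zero, zero_sub,
        neg_zero, mul_neg, neg_mul, neg_neg] at h
      linear_combination h
    have e6 : 48*Real.sqrt 3^2*(F 1 1).re + 48*Real.sqrt 3^2*(F 1 3).re + 16*Real.sqrt 3^2*(F 3 1).re + 16*Real.sqrt 3^2*(F 3 3).re = 0 := by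
      have h := keyF ![0, 1, 0, 1]
      simp only [Qt, DQt, sC, Matrix.mulVec, dotProduct, Fin.sum_univ_four,
        Matrix.cons_val_zero, Matrix.cons_val_one, Matrix.cons_val_two, Matrix.cons_val_three,
        Matrix.head_cons, Matrix.tail_cons, Matrix.head_fin_const,
        Complex.add_re, Complex.add_im, Complex.sub_re, Complex.sub_im,
        Complex.mul_re, Complex.mul_im, Complex.I_re, Complex.I_im,
        Complex.ofReal_re, Complex.ofReal_im, Complex.re_ofNat, Complex.im_ofNat,
        Complex.one_re, Complex.one_im, Complex.zero_re, Complex.zero_im,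
        Complex.neg_re, Complex.neg_im,
        mul_zero, zero_mul, mul_one, one_mul, add_zero, zero_add, sub_zero, zero_sub,
        neg_zero, mul_neg, neg_mul, neg_neg] at h
      linear_combination h
    have e7 : 48*Real.sqrt 3^2*(F 1 1).re + 48*Real.sqrt 3^2*(F 1 3).im + -16*Real.sqrt 3^2*(F 3 1).im + 16*Real.sqrt 3^2*(F 3 3).re = 0 := by
      have h := keyF ![0, Complex.I, 0, 1]
      simp only [Qt, DQt, sC, Matrix.mulVec, dotProduct, Fin.sum_univ_four,
        Matrix.cons_val_zero, Matrix.cons_val_one, Matrix.cons_val_two, Matrix.cons_val_three,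
        Matrix.head_cons, Matrix.tail_cons, Matrix.head_fin_const,
        Complex.add_re, Complex.add_im, Complex.sub_re, Complex.sub_im,
        Complex.mul_re, Complex.mul_im, Complex.I_re, Complex.I_im,
        Complex.ofReal_re, Complex.ofReal_im, Complex.re_ofNat, Complex.im_ofNat,
        Complex.one_re, Complex.one_im, Complex.zero_re, Complex.zero_im,
        Complex.neg_re, Complex.neg_im,
        mul_zero, zero_mul, mul_one, one_mul, add_zero, zero_add, sub_zero, zero_sub,
        neg_zero, mul_neg, neg_mul, neg_neg] at h
      linear_combination h
    have e10 : -12*Real.sqrt 3*(F 0 1).re + -12*Real.sqrt 3*(F 0 2).re + 18*(F 1 1).re + 18*(F 1 2).re + 18*(F 2 1).re + 18*(F 2 2).re + -12*Real.sqrt 3*(F 3 1).re + -12*Real.sqrt 3*(F 3 2).re = 0 := by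
      have h := keyF ![0, 1, 1, 0]
      simp only [Qt, DQt, sC, Matrix.mulVec, dotProduct, Fin.sum_univ_four,
        Matrix.cons_val_zero, Matrix.cons_val_one, Matrix.cons_val_two, Matrix.cons_val_three,
        Matrix.head_cons, Matrix.tail_cons, Matrix.head_fin_const,
        Complex.add_re, Complex.add_im, Complex.sub_re, Complex.sub_im,
        Complex.mul_re, Complex.mul_im, Complex.I_re, Complex.I_im,
        Complex.ofReal_re, Complex.ofReal_im, Complex.re_ofNat, Complex.im_ofNat,
        Complex.one_re, Complex.one_im, Complex.zero_re, Complex.zero_im,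
        Complex.neg_re, Complex.neg_im,
        mul_zero, zero_mul, mul_one, one_mul, add_zero, zero_add, sub_zero, zero_sub,
        neg_zero, mul_neg, neg_mul, neg_neg] at h
      linear_combination h
    have e11 : 12*Real.sqrt 3*(F 0 1).im + 12*Real.sqrt 3*(F 0 2).re + 18*(F 1 1).re + -18*(F 1 2).im + 18*(F 2 1).im + 18*(F 2 2).re + 12*Real.sqrt 3*(F 3 1).re + -12*Real.sqrt 3*(F 3 2).im = 0 := by
      have h := keyF ![0, 1, Complex.I, 0]
      simp only [Qt, DQt, sC, Matrix.mulVec, dotProduct, Fin.sum_univ_four,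
        Matrix.cons_val_zero, Matrix.cons_val_one, Matrix.cons_val_two, Matrix.cons_val_three,
        Matrix.head_cons, Matrix.tail_cons, Matrix.head_fin_const,
        Complex.add_re, Complex.add_im, Complex.sub_re, Complex.sub_im,
        Complex.mul_re, Complex.mul_im, Complex.I_re, Complex.I_im,
        Complex.ofReal_re, Complex.ofReal_im, Complex.re_ofNat, Complex.im_ofNat,
        Complex.one_re, Complex.one_im, Complex.zero_re, Complex.zero_im,
        Complex.neg_re, Complex.neg_im,
        mul_zero, zero_mul, mul_one, one_mul, add_zero, zero_add, sub_zero, zero_sub,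
        neg_zero, mul_neg, neg_mul, neg_neg] at h
      linear_combination h
    have e12 : 162*(F 0 0).re + 72*Real.sqrt 3*(F 0 0).re + 162*(F 0 1).re + 72*Real.sqrt 3*(F 0 1).re + 162*(F 0 3).re + 72*Real.sqrt 3*(F 0 3).re + 108*Real.sqrt 3*(F 1 0).re + 48*Real.sqrt 3^2*(F 1 0).re + 108*Real.sqrt 3*(F 1 1).re + 48*Real.sqrt 3^2*(F 1 1).re + 108*Real.sqrt 3*(F 1 3).re + 48*Real.sqrt 3^2*(F 1 3).re + -54*(F 2 0).re + -24*Real.sqrt 3*(F 2 0).re + -36*Real.sqrt 3^2*(F 2 0).re + -16*Real.sqrt 3^3*(F 2 0).re + -54*(F 2 1).re + -24*Real.sqrt 3*(F 2 1).re + -36*Real.sqrt 3^2*(F 2 1).re + -16*Real.sqrt 3^3*(F 2 1).re + -54*(F 2 3).re + -24*Real.sqrt 3*(F 2 3).re + -36*Real.sqrt 3^2*(F 2 3).re + -16*Real.sqrt 3^3*(F 2 3).re + 162*(F 3 0).re + 108*Real.sqrt 3*(F 3 0).re + 16*Real.sqrt 3^2*(F 3 0).re + 162*(F 3 1).re + 108*Real.sqrt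 3*(F 3 1).re + 16*Real.sqrt 3^2*(F 3 1).re + 162*(F 3 3).re + 108*Real.sqrt 3*(F 3 3).re + 16*Real.sqrt 3^2*(F 3 3).re = 0 := by
      have h := keyF ![1, 1, 0, 1]
      simp only [Qt, DQt, sC, Matrix.mulVec, dotProduct, Fin.sum_univ_four,
        Matrix.cons_val_zero, Matrix.cons_val_one, Matrix.cons_val_two, Matrix.cons_val_three,
        Matrix.head_cons, Matrix.tail_cons, Matrix.head_fin_const,
        Complex.add_re, Complex.add_im, Complex.sub_re, Complex.sub_im,
        Complex.mul_re, Complex.mul_im, Complex.I_re, Complex.I_im,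
        Complex.ofReal_re, Complex.ofReal_im, Complex.re_ofNat, Complex.im_ofNat,
        Complex.one_re, Complex.one_im, Complex.zero_re, Complex.zero_im,
        Complex.neg_re, Complex.neg_im,
        mul_zero, zero_mul, mul_one, one_mul, add_zero, zero_add, sub_zero, zero_sub,
        neg_zero, mul_neg, neg_mul, neg_neg] at h
      linear_combination h
    have e13 : 162*(F 0 0).re + -72*Real.sqrt 3*(F 0 0).im + -72*Real.sqrt 3*(F 0 1).re + -162*(F 0 1).im + 162*(F 0 3).re + -72*Real.sqrt 3*(F 0 3).im + -108*Real.sqrt 3*(F 1 0).re + 48*Real.sqrt 3^2*(F 1 0).im + 48*Real.sqrt 3^2*(F 1 1).re + 108*Real.sqrt 3*(F 1 1).im + -108*Real.sqrt 3*(F 1 3).re + 48*Real.sqrt 3^2*(F 1 3).im + 24*Real.sqrt 3*(F 2 0).re + 16*Real.sqrt 3^3*(F 2 0).re + 54*(F 2 0).im + 36*Real.sqrt 3^2*(F 2 0).im + 54*(F 2 1).re + 36*Real.sqrt 3^2*(F 2 1).re + -24*Real.sqrt 3*(F 2 1).im + -16*Real.sqrt 3^3*(F 2 1).im + 24*Real.sqrt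 3*(F 2 3).re + 16*Real.sqrt 3^3*(F 2 3).re + 54*(F 2 3).im + 36*Real.sqrt 3^2*(F 2 3).im + 162*(F 3 0).re + 16*Real.sqrt 3^2*(F 3 0).re + -36*Real.sqrt 3*(F 3 0).im + -36*Real.sqrt 3*(F 3 1).re + -162*(F 3 1).im + -16*Real.sqrt 3^2*(F 3 1).im + 162*(F 3 3).re + 16*Real.sqrt 3^2*(F 3 3).re + -36*Real.sqrt 3*(F 3 3).im = 0 := by
      have h := keyF ![1, Complex.I, 0, 1]
      simp only [Qt, DQt, sC, Matrix.mulVec, dotProduct, Fin.sum_univ_four,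
        Matrix.cons_val_zero, Matrix.cons_val_one, Matrix.cons_val_two, Matrix.cons_val_three,
        Matrix.head_cons, Matrix.tail_cons, Matrix.head_fin_const,
        Complex.add_re, Complex.add_im, Complex.sub_re, Complex.sub_im,
        Complex.mul_re, Complex.mul_im, Complex.I_re, Complex.I_im,
        Complex.ofReal_re, Complex.ofReal_im, Complex.re_ofNat, Complex.im_ofNat,
        Complex.one_re, Complex.one_im, Complex.zero_re, Complex.zero_im,
        Complex.neg_re, Complex.neg_im,
        mul_zero, zero_mul, mul_one, one_mul, add_zero, zero_add, sub_zero, zero_sub,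
        neg_zero, mul_neg, neg_mul, neg_neg] at h
      linear_combination h
    have e15 : 162*(F 0 0).re + 16*Real.sqrt 3^2*(F 0 0).re + -36*Real.sqrt 3*(F 0 0).im + -36*Real.sqrt 3*(F 0 2).re + -162*(F 0 2).im + -16*Real.sqrt 3^2*(F 0 2).im + 162*(F 0 3).re + 16*Real.sqrt 3^2*(F 0 3).re + -36*Real.sqrt 3*(F 0 3).im + 24*Real.sqrt 3*(F 1 0).re + 16*Real.sqrt 3^3*(F 1 0).re + 54*(F 1 0).im + 36*Real.sqrt 3^2*(F 1 0).im + 54*(F 1 2).re + 36*Real.sqrt 3^2*(F 1 2).re + -24*Real.sqrt 3*(F 1 2).im + -16*Real.sqrt 3^3*(F 1 2).im + 24*Real.sqrt 3*(F 1 3).re + 16*Real.sqrt 3^3*(F 1 3).re + 54*(F 1 3).im + 36*Real.sqrt 3^2*(F 1 3).im + -108*Real.sqrt 3*(F 2 0).re + 48*Real.sqrt 3^2*(F 2 0).im + 48*Real.sqrt 3^2*(F 2 2).re + 108*Real.sqrt 3*(F 2 2).im + -108*Real.sqrt 3*(F 2 3).re + 48*Real.sqrt 3^2*(F 2 3).im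 + 162*(F 3 0).re + -72*Real.sqrt 3*(F 3 0).im + -72*Real.sqrt 3*(F 3 2).re + -162*(F 3 2).im + 162*(F 3 3).re + -72*Real.sqrt 3*(F 3 3).im = 0 := by
      have h := keyF ![1, 0, Complex.I, 1]
      simp only [Qt, DQt, sC, Matrix.mulVec, dotProduct, Fin.sum_univ_four,
        Matrix.cons_val_zero, Matrix.cons_val_one, Matrix.cons_val_two, Matrix.cons_val_three,
        Matrix.head_cons, Matrix.tail_cons, Matrix.head_fin_const,
        Complex.add_re, Complex.add_im, Complex.sub_re, Complex.sub_im,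
        Complex.mul_re, Complex.mul_im, Complex.I_re, Complex.I_im,
        Complex.ofReal_re, Complex.ofReal_im, Complex.re_ofNat, Complex.im_ofNat,
        Complex.one_re, Complex.one_im, Complex.zero_re, Complex.zero_im,
        Complex.neg_re, Complex.neg_im,
        mul_zero, zero_mul, mul_one, one_mul, add_zero, zero_add, sub_zero, zero_sub,
        neg_zero, mul_neg, neg_mul, neg_neg] at h
      linear_combination h
    have e17 : 252*(F 0 0).re + 144*Real.sqrt 3*(F 0 0).re + 64*Real.sqrt 3^2*(F 0 0).re + 16*Real.sqrt 3^3*(F 0 0).re + 16*Real.sqrt 3^4*(F 0 0).re + -36*(F 0 0).im + -72*Real.sqrt 3*(F 0 0).im + -40*Real.sqrt 3^2*(F 0 0).im + -36*(F 0 1).re + -72*Real.sqrt 3*(F 0 1).re + -40*Real.sqrt 3^2*(F 0 1).re + -252*(F 0 1).im + -144*Real.sqrt 3*(F 0 1).im + -64*Real.sqrt 3^2*(F 0 1).im + -16*Real.sqrt 3^3*(F 0 1).im + -16*Real.sqrt 3^4*(F 0 1).im + 252*(F 0 2).re + 144*Real.sqrt 3*(F 0 2).re + 64*Real.sqrt 3^2*(F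 0 2).re + 16*Real.sqrt 3^3*(F 0 2).re + 16*Real.sqrt 3^4*(F 0 2).re + -36*(F 0 2).im + -72*Real.sqrt 3*(F 0 2).im + -40*Real.sqrt 3^2*(F 0 2).im + 252*(F 0 3).re + 144*Real.sqrt 3*(F 0 3).re + 64*Real.sqrt 3^2*(F 0 3).re + 16*Real.sqrt 3^3*(F 0 3).re + 16*Real.sqrt 3^4*(F 0 3).re + -36*(F 0 3).im + -72*Real.sqrt 3*(F 0 3).im + -40*Real.sqrt 3^2*(F 0 3).im + -36*(F 1 0).re + -144*Real.sqrt 3*(F 1 0).re + -72*Real.sqrt 3^2*(F 1 0).re + -16*Real.sqrt 3^3*(F 1 0).re + 108*(F 1 0).im + 120*Real.sqrt 3*(F 1 0).im + 96*Real.sqrt 3^2*(F 1 0).im + 64*Real.sqrt 3^3*(F 1 0).im + 16*Real.sqrt 3^4*(F 1 0).im + 108*(F 1 1).re + 120*Real.sqrt 3*(F 1 1).re + 96*Real.sqrt 3^2*(F 1 1).re + 64*Real.sqrt 3^3*(F 1 1).re + 16*Real.sqrt 3^4*(F 1 1).re + 36*(F 1 1).im + 144*Real.sqrt 3*(F 1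 1).im + 72*Real.sqrt 3^2*(F 1 1).im + 16*Real.sqrt 3^3*(F 1 1).im + -36*(F 1 2).re + -144*Real.sqrt 3*(F 1 2).re + -72*Real.sqrt 3^2*(F 1 2).re + -16*Real.sqrt 3^3*(F 1 2).re + 108*(F 1 2).im + 120*Real.sqrt 3*(F 1 2).im + 96*Real.sqrt 3^2*(F 1 2).im + 64*Real.sqrt 3^3*(F 1 2).im + 16*Real.sqrt 3^4*(F 1 2).im + -36*(F 1 3).re + -144*Real.sqrt 3*(F 1 3).re + -72*Real.sqrt 3^2*(F 1 3).re + -16*Real.sqrt 3^3*(F 1 3).re + 108*(F 1 3).im + 120*Real.sqrt 3*(F 1 3).im + 96*Real.sqrt 3^2*(F 1 3).im + 64*Real.sqrt 3^3*(F 1 3).im + 16*Real.sqrt 3^4*(F 1 3).im + 108*(F 2 0).re + 192*Real.sqrt 3*(F 2 0).re + 96*Real.sqrt 3^2*(F 2 0).re + 16*Real.sqrt 3^3*(F 2 0).re + 16*Real.sqrt 3^4*(F 2 0).re + 36*(F 2 0).im + -72*Real.sqrt 3*(F 2 0).im + -24*Real.sqrt 3^2*(F 2 0).im + -32*Real.sqrt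 3^3*(F 2 0).im + 36*(F 2 1).re + -72*Real.sqrt 3*(F 2 1).re + -24*Real.sqrt 3^2*(F 2 1).re + -32*Real.sqrt 3^3*(F 2 1).re + -108*(F 2 1).im + -192*Real.sqrt 3*(F 2 1).im + -96*Real.sqrt 3^2*(F 2 1).im + -16*Real.sqrt 3^3*(F 2 1).im + -16*Real.sqrt 3^4*(F 2 1).im + 108*(F 2 2).re + 192*Real.sqrt 3*(F 2 2).re + 96*Real.sqrt 3^2*(F 2 2).re + 16*Real.sqrt 3^3*(F 2 2).re + 16*Real.sqrt 3^4*(F 2 2).re + 36*(F 2 2).im + -72*Real.sqrt 3*(F 2 2).im + -24*Real.sqrt 3^2*(F 2 2).im + -32*Real.sqrt 3^3*(F 2 2).im + 108*(F 2 3).re + 192*Real.sqrt 3*(F 2 3).re + 96*Real.sqrt 3^2*(F 2 3).re + 16*Real.sqrt 3^3*(F 2 3).re + 16*Real.sqrt 3^4*(F 2 3).re + 36*(F 2 3).im + -72*Real.sqrt 3*(F 2 3).im + -24*Real.sqrt 3^2*(F 2 3).im + -32*Real.sqrt 3^3*(F 2 3).im + 252*(F 3 0).re + 120*Real.sqrt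 3*(F 3 0).re + 64*Real.sqrt 3^2*(F 3 0).re + 32*Real.sqrt 3^3*(F 3 0).re + 16*Real.sqrt 3^4*(F 3 0).re + -36*(F 3 0).im + -8*Real.sqrt 3^2*(F 3 0).im + 16*Real.sqrt 3^3*(F 3 0).im + -36*(F 3 1).re + -8*Real.sqrt 3^2*(F 3 1).re + 16*Real.sqrt 3^3*(F 3 1).re + -252*(F 3 1).im + -120*Real.sqrt 3*(F 3 1).im + -64*Real.sqrt 3^2*(F 3 1).im + -32*Real.sqrt 3^3*(F 3 1).im + -16*Real.sqrt 3^4*(F 3 1).im + 252*(F 3 2).re + 120*Real.sqrt 3*(F 3 2).re + 64*Real.sqrt 3^2*(F 3 2).re + 32*Real.sqrt 3^3*(F 3 2).re + 16*Real.sqrt 3^4*(F 3 2).re + -36*(F 3 2).im + -8*Real.sqrt 3^2*(F 3 2).im + 16*Real.sqrt 3^3*(F 3 2).im + 252*(F 3 3).re + 120*Real.sqrt 3*(F 3 3).re + 64*Real.sqrt 3^2*(F 3 3).re + 32*Real.sqrt 3^3*(F 3 3).re + 16*Real.sqrt 3^4*(F 3 3).re + -36*(F 3 3).im + -8*Real.sqrt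 3^2*(F 3 3).im + 16*Real.sqrt 3^3*(F 3 3).im = 0 := by
      have h := keyF ![1, Complex.I, 1, 1]
      simp only [Qt, DQt, sC, Matrix.mulVec, dotProduct, Fin.sum_univ_four,
        Matrix.cons_val_zero, Matrix.cons_val_one, Matrix.cons_val_two, Matrix.cons_val_three,
        Matrix.head_cons, Matrix.tail_cons, Matrix.head_fin_const,
        Complex.add_re, Complex.add_im, Complex.sub_re, Complex.sub_im,
        Complex.mul_re, Complex.mul_im, Complex.I_re, Complex.I_im,
        Complex.ofReal_re, Complex.ofReal_im, Complex.re_ofNat, Complex.im_ofNat,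
        Complex.one_re, Complex.one_im, Complex.zero_re, Complex.zero_im,
        Complex.neg_re, Complex.neg_im,
        mul_zero, zero_mul, mul_one, one_mul, add_zero, zero_add, sub_zero, zero_sub,
        neg_zero, mul_neg, neg_mul, neg_neg] at h
      linear_combination h
    have e18 : -12*Real.sqrt 3*(F 0 0).re + 16*Real.sqrt 3^2*(F 0 0).re + -12*Real.sqrt 3*(F 0 1).re + 16*Real.sqrt 3^2*(F 0 1).re + -12*Real.sqrt 3*(F 0 2).re + 16*Real.sqrt 3^2*(F 0 2).re + 18*(F 1 0).re + -24*Real.sqrt 3*(F 1 0).re + 18*(F 1 1).re + -24*Real.sqrt 3*(F 1 1).re + 18*(F 1 2).re + -24*Real.sqrt 3*(F 1 2).re + 18*(F 2 0).re + -60*Real.sqrt 3*(F 2 0).re + 48*Real.sqrt 3^2*(F 2 0).re + 18*(F 2 1).re + -60*Real.sqrt 3*(F 2 1).re + 48*Real.sqrt 3^2*(F 2 1).re + 18*(F 2 2).re + -60*Real.sqrt 3*(F 2 2).re + 48*Real.sqrt 3^2*(F 2 2).re + 18*(F 3 0).re + -36*Real.sqrt 3*(F 3 0).re + 28*Real.sqrt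 3^2*(F 3 0).re + -16*Real.sqrt 3^3*(F 3 0).re + 18*(F 3 1).re + -36*Real.sqrt 3*(F 3 1).re + 28*Real.sqrt 3^2*(F 3 1).re + -16*Real.sqrt 3^3*(F 3 1).re + 18*(F 3 2).re + -36*Real.sqrt 3*(F 3 2).re + 28*Real.sqrt 3^2*(F 3 2).re + -16*Real.sqrt 3^3*(F 3 2).re = 0 := by
      have h := keyF ![1, 1, 1, 0]
      simp only [Qt, DQt, sC, Matrix.mulVec, dotProduct, Fin.sum_univ_four,
        Matrix.cons_val_zero, Matrix.cons_val_one, Matrix.cons_val_two, Matrix.cons_val_three,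
        Matrix.head_cons, Matrix.tail_cons, Matrix.head_fin_const,
        Complex.add_re, Complex.add_im, Complex.sub_re, Complex.sub_im,
        Complex.mul_re, Complex.mul_im, Complex.I_re, Complex.I_im,
        Complex.ofReal_re, Complex.ofReal_im, Complex.re_ofNat, Complex.im_ofNat,
        Complex.one_re, Complex.one_im, Complex.zero_re, Complex.zero_im,
        Complex.neg_re, Complex.neg_im,
        mul_zero, zero_mul, mul_one, one_mul, add_zero, zero_add, sub_zero, zero_sub,
        neg_zero, mul_neg, neg_mul, neg_neg] at h
      linear_combination h
    have e20 : 16*Real.sqrt 3^2*(F 0 0).re + 12*Real.sqrt 3*(F 0 0).im + 16*Real.sqrt 3^2*(F 0 1).re + 12*Real.sqrt 3*(F 0 1).im + 12*Real.sqrt 3*(F 0 2).re + -16*Real.sqrt 3^2*(F 0 2).im + 18*(F 1 0).re + -24*Real.sqrt 3*(F 1 0).im + 18*(F 1 1).re + -24*Real.sqrt 3*(F 1 1).im + -24*Real.sqrt 3*(F 1 2).re + -18*(F 1 2).im + -12*Real.sqrt 3*(F 2 0).re + 18*(F 2 0).im + 48*Real.sqrt 3^2*(F 2 0).im + -12*Real.sqrt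 3*(F 2 1).re + 18*(F 2 1).im + 48*Real.sqrt 3^2*(F 2 1).im + 18*(F 2 2).re + 48*Real.sqrt 3^2*(F 2 2).re + 12*Real.sqrt 3*(F 2 2).im + 36*Real.sqrt 3*(F 3 0).re + 16*Real.sqrt 3^3*(F 3 0).re + 18*(F 3 0).im + -4*Real.sqrt 3^2*(F 3 0).im + 36*Real.sqrt 3*(F 3 1).re + 16*Real.sqrt 3^3*(F 3 1).re + 18*(F 3 1).im + -4*Real.sqrt 3^2*(F 3 1).im + 18*(F 3 2).re + -4*Real.sqrt 3^2*(F 3 2).re + -36*Real.sqrt 3*(F 3 2).im + -16*Real.sqrt 3^3*(F 3 2).im = 0 := by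
      have h := keyF ![1, 1, Complex.I, 0]
      simp only [Qt, DQt, sC, Matrix.mulVec, dotProduct, Fin.sum_univ_four,
        Matrix.cons_val_zero, Matrix.cons_val_one, Matrix.cons_val_two, Matrix.cons_val_three,
        Matrix.head_cons, Matrix.tail_cons, Matrix.head_fin_const,
        Complex.add_re, Complex.add_im, Complex.sub_re, Complex.sub_im,
        Complex.mul_re, Complex.mul_im, Complex.I_re, Complex.I_im,
        Complex.ofReal_re, Complex.ofReal_im, Complex.re_ofNat, Complex.im_ofNat,
        Complex.one_re, Complex.one_im, Complex.zero_re, Complex.zero_im,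
        Complex.neg_re, Complex.neg_im,
        mul_zero, zero_mul, mul_one, one_mul, add_zero, zero_add, sub_zero, zero_sub,
        neg_zero, mul_neg, neg_mul, neg_neg] at h
      linear_combination h
    have t_x02 : 1*(F 0 2).re = 0 := by
      linear_combination ((1/2)) * sk0 + ((3/2)) * sk2 + ((3/2)) * sk6 + ((-1/96)) * e4 + (-((-1/6)*(F 0 0).re + (-1/6)*(F 0 2).re + (-1/2)*(F 2 0).re + (-1/2)*(F 2 2).re)) * hs
    have t_y02 : 1*(F 0 2).im = 0 := by
      linear_combination ((-1/2)) * sk0 + ((-3/2)) * sk2 + ((-3/2)) * sk7 + ((1/96)) * e5 + (-((1/6)*(F 0 0).re + (-1/6)*(F 0 2).im + (1/2)*(F 2 0).im + (1/2)*(F 2 2).re)) * hs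
    have t_x03 : 1*(F 0 3).re = 0 := by
      linear_combination ((-60/13) + (-37/13)*Real.sqrt 3) * sk0 + ((-18/13) + (9/26)*Real.sqrt 3) * sk1 + ((-90/13) + (-33/26)*Real.sqrt 3) * sk2 + ((-36/13) + (-30/13)*Real.sqrt 3) * sk3 + ((-45/13) + (-18/13)*Real.sqrt 3) * sk4 + ((-21/13) + (15/13)*Real.sqrt 3) * sk6 + ((-23/13) + (-30/13)*Real.sqrt 3) * sk8 + ((-18/13) + (9/26)*Real.sqrt 3) * sk10 + ((36/13) + (30/13)*Real.sqrt 3) * sk14 + ((1/52) + (-1/208)*Real.sqrt 3) * e4 + ((-5/156) + (-1/78)*Real.sqrt 3) * e6 + ((11/78) + (1/156)*Real.sqrt 3) * e10 + ((-2/429) + (7/429)*Real.sqrt 3) * e12 + ((1/26) + (1/39)*Real.sqrt 3) * e18 + (-((256/143)*(F 0 0).re + (1/3)*Real.sqrt 3*(F 0 0).re + (201/143)*(F 0 1).re + (16/39)*Real.sqrt 3*(F 0 1).re + (7/13)*(F 0 2).re + (1/3)*Real.sqrt 3*(F 0 2).re + (168/143)*(F 0 3).re + (12/13)*(F 1 0).re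 + (112/143)*Real.sqrt 3*(F 1 0).re + (-8/13)*(F 1 1).re + (24/143)*Real.sqrt 3*(F 1 1).re + (-8/13)*(F 1 2).re + (24/143)*Real.sqrt 3*(F 1 3).re + (32/143)*(F 2 0).re + (19/39)*Real.sqrt 3*(F 2 0).re + (-112/429)*Real.sqrt 3^2*(F 2 0).re + (-100/143)*(F 2 1).re + (28/39)*Real.sqrt 3*(F 2 1).re + (-112/429)*Real.sqrt 3^2*(F 2 1).re + (16/13)*(F 2 2).re + 1*Real.sqrt 3*(F 2 2).re + (-144/143)*(F 2 3).re + (-20/39)*Real.sqrt 3*(F 2 3).re + (-112/429)*Real.sqrt 3^2*(F 2 3).re + (262/429)*(F 3 0).re + (4/11)*Real.sqrt 3*(F 3 0).re + (-16/39)*Real.sqrt 3^2*(F 3 0).re + (3/143)*(F 3 1).re + (68/429)*Real.sqrt 3*(F 3 1).re + (-16/39)*Real.sqrt 3^2*(F 3 1).re + (-15/13)*(F 3 2).re + (4/39)*Real.sqrt 3*(F 3 2).re + (-16/39)*Real.sqrt 3^2*(F 3 2).re + (168/143)*(F 3 3).re + (8/143)*Real.sqrt 3*(F 3 3).re)) *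 hs
    have t_y03 : 1*(F 0 3).im = 0 := by
      linear_combination ((-51131/5577) + (248532/1859)*Real.sqrt 3) * sk0 + ((165014/1859) + (74559/3718)*Real.sqrt 3) * sk1 + ((238848/1859) + (96545/3718)*Real.sqrt 3) * sk2 + ((-41655/1859) + (734603/5577)*Real.sqrt 3) * sk3 + ((233083/1859) + (36704/1859)*Real.sqrt 3) * sk4 + ((-10149/143) + (10397/429)*Real.sqrt 3) * sk5 + ((-132839/1859) + (200974/5577)*Real.sqrt 3) * sk6 + ((-17088/143) + (6469/143)*Real.sqrt 3) * sk7 + ((-151674/1859) + (2385484/16731)*Real.sqrt 3) * sk8 + ((1/11) + (2/11)*Real.sqrt 3) * sk9 + ((-145179/1859) + (113518/1859)*Real.sqrt 3) * sk10 + ((12535/143) + (-7665/286)*Real.sqrt 3) * sk11 + ((7874/143) + (469/143)*Real.sqrt 3) * sk12 + ((5190/143) + (-3293/143)*Real.sqrt 3) * sk13 + ((-41829/169) + (5462/169)*Real.sqrt 3) * sk14 + ((17814/143) + (-35467/429)*Real.sqrt 3) * sk15 + ((-2168/1859) + (18377/44616)*Real.sqrt 3) * e4 + ((-125/6864) + (9083/30888)*Real.sqrt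 3) * e5 + ((8903/12168) + (11833/73008)*Real.sqrt 3) * e6 + ((-1549/6864) + (337/30888)*Real.sqrt 3) * e7 + ((-18797/5577) + (-33005/100386)*Real.sqrt 3) * e10 + ((-1141/1287) + (101/5148)*Real.sqrt 3) * e11 + ((-131561/368082) + (-94768/552123)*Real.sqrt 3) * e12 + ((-86/429) + (413/7722)*Real.sqrt 3) * e13 + ((433/858) + (-1985/7722)*Real.sqrt 3) * e15 + ((313/858) + (-83/429)*Real.sqrt 3) * e17 + ((-13942/16731) + (-11692/16731)*Real.sqrt 3) * e18 + ((-1/66) + (-1/33)*Real.sqrt 3) * e20 + (-((-4548209/184041)*(F 0 0).re + (-339904/16731)*Real.sqrt 3*(F 0 0).re + (392/143)*Real.sqrt 3^2*(F 0 0).re + (-1328/429)*Real.sqrt 3^3*(F 0 0).re + (626/143)*(F 0 0).im + (3320/429)*Real.sqrt 3*(F 0 0).im + (-1111310/61347)*(F 0 1).re + (-65704/16731)*Real.sqrt 3*(F 0 1).re + (-549/143)*(F 0 1).im + (2264/143)*Real.sqrt 3*(F 0 1).im + (-392/143)*Real.sqrt 3^2*(F 0 1).im + (1328/429)*Real.sqrt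 3^3*(F 0 1).im + (-38059/5577)*(F 0 2).re + (-341698/16731)*Real.sqrt 3*(F 0 2).re + (392/143)*Real.sqrt 3^2*(F 0 2).re + (-1328/429)*Real.sqrt 3^3*(F 0 2).re + (-1173/143)*(F 0 2).im + (3274/429)*Real.sqrt 3*(F 0 2).im + (-11712/20449)*(F 0 3).re + (-77008/3861)*Real.sqrt 3*(F 0 3).re + (392/143)*Real.sqrt 3^2*(F 0 3).re + (-1328/429)*Real.sqrt 3^3*(F 0 3).re + (678/143)*(F 0 3).im + (3320/429)*Real.sqrt 3*(F 0 3).im + (-180278/5577)*(F 1 0).re + (1459256/184041)*Real.sqrt 3*(F 1 0).re + (-3928/3861)*Real.sqrt 3^2*(F 1 0).re + (206/143)*(F 1 0).im + (-14414/1287)*Real.sqrt 3*(F 1 0).im + (-72/11)*Real.sqrt 3^2*(F 1 0).im + (-1328/429)*Real.sqrt 3^3*(F 1 0).im + (-67417/5577)*(F 1 1).re + (-38465/20449)*Real.sqrt 3*(F 1 1).re + (-72/11)*Real.sqrt 3^2*(F 1 1).re + (-1328/429)*Real.sqrt 3^3*(F 1 1).re + (-626/143)*(F 1 1).im + (-3472/429)*Real.sqrt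 3*(F 1 1).im + (-1328/429)*Real.sqrt 3^2*(F 1 1).im + (259598/5577)*(F 1 2).re + (-166/143)*Real.sqrt 3*(F 1 2).re + (1328/429)*Real.sqrt 3^2*(F 1 2).re + (4580/429)*(F 1 2).im + (-1800/143)*Real.sqrt 3*(F 1 2).im + (-9392/3861)*Real.sqrt 3^2*(F 1 2).im + (-1328/429)*Real.sqrt 3^3*(F 1 2).im + (-5996/429)*(F 1 3).re + (963683/61347)*Real.sqrt 3*(F 1 3).re + (-3928/3861)*Real.sqrt 3^2*(F 1 3).re + (-1447/143)*(F 1 3).im + (-4580/429)*Real.sqrt 3*(F 1 3).im + (-72/11)*Real.sqrt 3^2*(F 1 3).im + (-1328/429)*Real.sqrt 3^3*(F 1 3).im + (567608/61347)*(F 2 0).re + (-453502/16731)*Real.sqrt 3*(F 2 0).re + (1167424/184041)*Real.sqrt 3^2*(F 2 0).re + (-1328/429)*Real.sqrt 3^3*(F 2 0).re + (509/13)*(F 2 0).im + (-684/143)*Real.sqrt 3*(F 2 0).im + (2656/429)*Real.sqrt 3^2*(F 2 0).im + (2702422/61347)*(F 2 1).re + (-447562/16731)*Real.sqrt 3*(F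 2 1).re + (4934560/552123)*Real.sqrt 3^2*(F 2 1).re + (-4580/429)*(F 2 1).im + (3400/143)*Real.sqrt 3*(F 2 1).im + (-13888/3861)*Real.sqrt 3^2*(F 2 1).im + (1328/429)*Real.sqrt 3^3*(F 2 1).im + (-12841/507)*(F 2 2).re + (-197840/5577)*Real.sqrt 3*(F 2 2).re + (392/143)*Real.sqrt 3^2*(F 2 2).re + (-1328/429)*Real.sqrt 3^3*(F 2 2).re + (-626/143)*(F 2 2).im + (-232/33)*Real.sqrt 3*(F 2 2).im + (2656/429)*Real.sqrt 3^2*(F 2 2).im + (1286988/20449)*(F 2 3).re + (-223072/16731)*Real.sqrt 3*(F 2 3).re + (1167424/184041)*Real.sqrt 3^2*(F 2 3).re + (-1328/429)*Real.sqrt 3^3*(F 2 3).re + (5828/143)*(F 2 3).im + (-22450/1287)*Real.sqrt 3*(F 2 3).im + (2656/429)*Real.sqrt 3^2*(F 2 3).im + (271588/61347)*(F 3 0).re + (-10138352/552123)*Real.sqrt 3*(F 3 0).re + (173032/16731)*Real.sqrt 3^2*(F 3 0).re + (-1328/429)*Real.sqrt 3^3*(F 3 0).re + (1904/429)*(F 3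 0).im + (3220/429)*Real.sqrt 3*(F 3 0).im + (-1328/429)*Real.sqrt 3^2*(F 3 0).im + (211115/20449)*(F 3 1).re + (138947/184041)*Real.sqrt 3*(F 3 1).re + (127168/16731)*Real.sqrt 3^2*(F 3 1).re + (1117/143)*(F 3 1).im + (3898/429)*Real.sqrt 3*(F 3 1).im + (152/429)*Real.sqrt 3^2*(F 3 1).im + (1328/429)*Real.sqrt 3^3*(F 3 1).im + (317612/5577)*(F 3 2).re + (-89836/5577)*Real.sqrt 3*(F 3 2).re + (181144/16731)*Real.sqrt 3^2*(F 3 2).re + (-1328/429)*Real.sqrt 3^3*(F 3 2).re + (-1415/143)*(F 3 2).im + (3272/429)*Real.sqrt 3*(F 3 2).im + (-1120/429)*Real.sqrt 3^2*(F 3 2).im + (-415115/20449)*(F 3 3).re + (-1678099/184041)*Real.sqrt 3*(F 3 3).re + (-152/429)*Real.sqrt 3^2*(F 3 3).re + (-1328/429)*Real.sqrt 3^3*(F 3 3).re + (626/143)*(F 3 3).im + (96/13)*Real.sqrt 3*(F 3 3).im + (-1328/429)*Real.sqrt 3^2*(F 3 3).im)) * hs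
    have t_x13 : 1*(F 1 3).re = 0 := by
      linear_combination ((-3/2)) * sk1 + ((-1/2)) * sk3 + ((-1/2)) * sk12 + ((1/96)) * e6 + (-((1/2)*(F 1 1).re + (1/2)*(F 1 3).re + (1/6)*(F 3 1).re + (1/6)*(F 3 3).re)) * hs
    have t_y13 : 1*(F 1 3).im = 0 := by
      linear_combination ((-3/2)) * sk1 + ((-1/2)) * sk3 + ((1/2)) * sk13 + ((1/96)) * e7 + (-((1/2)*(F 1 1).re + (1/2)*(F 1 3).im + (-1/6)*(F 3 1).im + (1/6)*(F 3 3).re)) * hs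
    have t_x12 : -2*Real.sqrt 3*(F 0 1).re + 3*(F 1 2).re = 0 := by
      linear_combination ((-113/13) + (-40/13)*Real.sqrt 3) * sk0 + ((9/13) + (-63/26)*Real.sqrt 3) * sk1 + ((-33/13) + (-159/26)*Real.sqrt 3) * sk2 + ((-99/13) + (-24/13)*Real.sqrt 3) * sk3 + ((-36/13) + (-56/13)*Real.sqrt 3) * sk4 + ((69/13) + (-14/13)*Real.sqrt 3) * sk6 + ((-99/13) + (-24/13)*Real.sqrt 3) * sk8 + ((48/13) + (-63/26)*Real.sqrt 3) * sk10 + ((99/13) + (24/13)*Real.sqrt 3) * sk14 + ((-1/104) + (1/78)*Real.sqrt 3) * e4 + ((-1/39) + (-11/312)*Real.sqrt 3) * e6 + ((1/78) + (83/468)*Real.sqrt 3) * e10 + ((67/858) + (-10/429)*Real.sqrt 3) * e12 + ((2/39) + (1/39)*Real.sqrt 3) * e18 + (-((-566/429)*(F 0 0).re + (8/13)*Real.sqrt 3*(F 0 0).re + (-471/143)*(F 0 1).re + (16/39)*Real.sqrt 3*(F 0 1).re + (-23/13)*(F 0 2).re + (8/13)*Real.sqrt 3*(F 0 2).re + (-240/143)*(F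 0 3).re + (8/13)*(F 1 0).re + (-160/143)*Real.sqrt 3*(F 1 0).re + (-8/13)*(F 1 1).re + (-402/143)*Real.sqrt 3*(F 1 1).re + (-8/13)*(F 1 2).re + (-402/143)*Real.sqrt 3*(F 1 3).re + (-96/143)*(F 2 0).re + (56/39)*Real.sqrt 3*(F 2 0).re + (160/429)*Real.sqrt 3^2*(F 2 0).re + (-30/143)*(F 2 1).re + (32/39)*Real.sqrt 3*(F 2 1).re + (160/429)*Real.sqrt 3^2*(F 2 1).re + (6/13)*(F 2 2).re + (24/13)*Real.sqrt 3*(F 2 2).re + (-162/143)*(F 2 3).re + (-16/39)*Real.sqrt 3*(F 2 3).re + (160/429)*Real.sqrt 3^2*(F 2 3).re + (-284/143)*(F 3 0).re + (-68/143)*Real.sqrt 3*(F 3 0).re + (-16/39)*Real.sqrt 3^2*(F 3 0).re + (-647/143)*(F 3 1).re + (-446/429)*Real.sqrt 3*(F 3 1).re + (-16/39)*Real.sqrt 3^2*(F 3 1).re + (-37/13)*(F 3 2).re + (-4/39)*Real.sqrt 3*(F 3 2).re + (-16/39)*Real.sqrt 3^2*(F 3 2).re + (-240/143)*(F 3 3).re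 + (-134/143)*Real.sqrt 3*(F 3 3).re)) * hs
    have t_y12 : -2*Real.sqrt 3*(F 0 1).im + 3*(F 1 2).im = 0 := by
      linear_combination ((25953/338) + (-16883/676)*Real.sqrt 3) * sk0 + ((5307/676) + (10227/676)*Real.sqrt 3) * sk1 + ((-921/676) + (10341/676)*Real.sqrt 3) * sk2 + ((26991/338) + (-16921/676)*Real.sqrt 3) * sk3 + ((-1407/169) + (3501/169)*Real.sqrt 3) * sk4 + ((1227/52) + (-493/26)*Real.sqrt 3) * sk5 + ((13083/338) + (-7083/338)*Real.sqrt 3) * sk6 + ((2313/52) + (-1719/52)*Real.sqrt 3) * sk7 + ((31723/338) + (-40507/1014)*Real.sqrt 3) * sk8 + ((35883/676) + (-4551/169)*Real.sqrt 3) * sk10 + ((-1449/52) + (615/26)*Real.sqrt 3) * sk11 + ((-87/26) + (162/13)*Real.sqrt 3) * sk12 + ((-981/52) + (567/52)*Real.sqrt 3) * sk13 + ((10509/169) + (-18963/338)*Real.sqrt 3) * sk14 + ((-3687/52) + (488/13)*Real.sqrt 3) * sk15 + ((2123/5408) + (-1213/4056)*Real.sqrt 3) * e4 + ((229/1248) +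 (-233/7488)*Real.sqrt 3) * e5 + ((-709/16224) + (763/8112)*Real.sqrt 3) * e6 + ((41/1248) + (-419/7488)*Real.sqrt 3) * e7 + ((97/507) + (-955/2028)*Real.sqrt 3) * e10 + ((-17/312) + (-8/39)*Real.sqrt 3) * e11 + ((64/5577) + (-537/7436)*Real.sqrt 3) * e12 + ((19/312) + (-25/468)*Real.sqrt 3) * e13 + ((-73/312) + (17/117)*Real.sqrt 3) * e15 + ((-9/52) + (11/104)*Real.sqrt 3) * e17 + ((-43/169) + (-23/507)*Real.sqrt 3) * e18 + (-((-4331/1859)*(F 0 0).re + (10937/2028)*Real.sqrt 3*(F 0 0).re + (-14/13)*Real.sqrt 3^2*(F 0 0).re + (22/13)*Real.sqrt 3^3*(F 0 0).re + (-27/13)*(F 0 0).im + (-55/13)*Real.sqrt 3*(F 0 0).im + (146/1859)*(F 0 1).re + (-2513/507)*Real.sqrt 3*(F 0 1).re + (-44/13)*(F 0 1).im + (-118/13)*Real.sqrt 3*(F 0 1).im + (14/13)*Real.sqrt 3^2*(F 0 1).im + (-22/13)*Real.sqrt 3^3*(F 0 1).im + (553/338)*(F 0 2).re + (1808/507)*Real.sqrt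 3*(F 0 2).re + (-14/13)*Real.sqrt 3^2*(F 0 2).re + (22/13)*Real.sqrt 3^3*(F 0 2).re + (3/26)*(F 0 2).im + (-315/52)*Real.sqrt 3*(F 0 2).im + (-44728/5577)*(F 0 3).re + (1334/117)*Real.sqrt 3*(F 0 3).re + (-14/13)*Real.sqrt 3^2*(F 0 3).re + (22/13)*Real.sqrt 3^3*(F 0 3).re + (-27/13)*(F 0 3).im + (-55/13)*Real.sqrt 3*(F 0 3).im + (376/169)*(F 1 0).re + (-67237/5577)*Real.sqrt 3*(F 1 0).re + (74/117)*Real.sqrt 3^2*(F 1 0).re + (67/26)*(F 1 0).im + (266/39)*Real.sqrt 3*(F 1 0).im + 4*Real.sqrt 3^2*(F 1 0).im + (22/13)*Real.sqrt 3^3*(F 1 0).im + (730/169)*(F 1 1).re + (-355/7436)*Real.sqrt 3*(F 1 1).re + 4*Real.sqrt 3^2*(F 1 1).re + (22/13)*Real.sqrt 3^3*(F 1 1).re + (27/13)*(F 1 1).im + (63/13)*Real.sqrt 3*(F 1 1).im + (22/13)*Real.sqrt 3^2*(F 1 1).im + (-5131/338)*(F 1 2).re + (5/13)*Real.sqrt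 3*(F 1 2).re + (-22/13)*Real.sqrt 3^2*(F 1 2).re + (-31/13)*(F 1 2).im + (308/39)*Real.sqrt 3*(F 1 2).im + (196/117)*Real.sqrt 3^2*(F 1 2).im + (22/13)*Real.sqrt 3^3*(F 1 2).im + (-25/26)*(F 1 3).re + (-42058/5577)*Real.sqrt 3*(F 1 3).re + (74/117)*Real.sqrt 3^2*(F 1 3).re + (54/13)*(F 1 3).im + (215/52)*Real.sqrt 3*(F 1 3).im + 4*Real.sqrt 3^2*(F 1 3).im + (22/13)*Real.sqrt 3^3*(F 1 3).im + (-18361/3718)*(F 2 0).re + (-115/169)*Real.sqrt 3*(F 2 0).re + (-12986/16731)*Real.sqrt 3^2*(F 2 0).re + (22/13)*Real.sqrt 3^3*(F 2 0).re + (-180/13)*(F 2 0).im + (341/52)*Real.sqrt 3*(F 2 0).im + (-44/13)*Real.sqrt 3^2*(F 2 0).im + (-59963/3718)*(F 2 1).re + (667/507)*Real.sqrt 3*(F 2 1).re + (-4144/1859)*Real.sqrt 3^2*(F 2 1).re + (44/13)*(F 2 1).im + (-524/39)*Real.sqrt 3*(F 2 1).im + (226/117)*Real.sqrt 3^2*(F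 2 1).im + (-22/13)*Real.sqrt 3^3*(F 2 1).im + (1249/169)*(F 2 2).re + (953/676)*Real.sqrt 3*(F 2 2).re + (-14/13)*Real.sqrt 3^2*(F 2 2).re + (22/13)*Real.sqrt 3^3*(F 2 2).re + (27/13)*(F 2 2).im + 3*Real.sqrt 3*(F 2 2).im + (-44/13)*Real.sqrt 3^2*(F 2 2).im + (-26566/1859)*(F 2 3).re + (2679/169)*Real.sqrt 3*(F 2 3).re + (-12986/16731)*Real.sqrt 3^2*(F 2 3).re + (22/13)*Real.sqrt 3^3*(F 2 3).re + (-589/26)*(F 2 3).im + (314/39)*Real.sqrt 3*(F 2 3).im + (-44/13)*Real.sqrt 3^2*(F 2 3).im + (-36214/5577)*(F 3 0).re + (118762/16731)*Real.sqrt 3*(F 3 0).re + (680/507)*Real.sqrt 3^2*(F 3 0).re + (22/13)*Real.sqrt 3^3*(F 3 0).re + (-27/13)*(F 3 0).im + (-47/13)*Real.sqrt 3*(F 3 0).im + (22/13)*Real.sqrt 3^2*(F 3 0).im + (-203/3718)*(F 3 1).re + (-2594/5577)*Real.sqrt 3*(F 3 1).re + (1226/507)*Real.sqrt 3^2*(F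 3 1).re + (-129/26)*(F 3 1).im + (-237/52)*Real.sqrt 3*(F 3 1).im + (-8/13)*Real.sqrt 3^2*(F 3 1).im + (-22/13)*Real.sqrt 3^3*(F 3 1).im + (-788/169)*(F 3 2).re + (4618/507)*Real.sqrt 3*(F 3 2).re + (680/507)*Real.sqrt 3^2*(F 3 2).re + (22/13)*Real.sqrt 3^3*(F 3 2).re + (116/13)*(F 3 2).im + (-47/13)*Real.sqrt 3*(F 3 2).im + (22/13)*Real.sqrt 3^2*(F 3 2).im + (-6234/1859)*(F 3 3).re + (109469/22308)*Real.sqrt 3*(F 3 3).re + (8/13)*Real.sqrt 3^2*(F 3 3).re + (22/13)*Real.sqrt 3^3*(F 3 3).re + (-27/13)*(F 3 3).im + (-47/13)*Real.sqrt 3*(F 3 3).im + (22/13)*Real.sqrt 3^2*(F 3 3).im)) * hs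
    have t_x23 : -1*(F 0 1).re + 1*(F 2 3).re = 0 := by
      linear_combination ((1/2)) * sk0 + ((3/2) + (-1/2)*Real.sqrt 3) * sk1 + ((3/2) + (-1/2)*Real.sqrt 3) * sk2 + ((1/2)) * sk3 + ((3/2)) * sk6 + ((-1/2)*Real.sqrt 3) * sk10 + ((3/2)) * sk12 + (1) * sk14 + ((-1/96)) * e4 + ((-1/96)) * e6 + ((1/36)*Real.sqrt 3) * e10 + (-((-1/6)*(F 0 0).re + (-1/3)*(F 0 1).re + (-1/2)*(F 0 2).re + (-1/2)*(F 1 1).re + (-1/2)*(F 1 3).re + (-1/2)*(F 2 0).re + (-1/2)*(F 2 2).re + (-1/2)*(F 3 1).re + (-1/3)*(F 3 2).re + (-1/6)*(F 3 3).re)) * hs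
    have t_y23 : -1*(F 0 1).im + 1*(F 2 3).im = 0 := by
      linear_combination ((1/2)) * sk0 + ((3/2) + (1/2)*Real.sqrt 3) * sk1 + ((3/2) + (1/2)*Real.sqrt 3) * sk2 + ((1/2)) * sk3 + ((3/2)) * sk6 + ((1/2)*Real.sqrt 3) * sk11 + ((3/2)) * sk12 + (-1) * sk15 + ((-1/96)) * e4 + ((-1/96)) * e6 + ((-1/36)*Real.sqrt 3) * e11 + (-((-1/6)*(F 0 0).re + (-1/3)*(F 0 1).im + (-1/2)*(F 0 2).re + (-1/2)*(F 1 1).re + (-1/2)*(F 1 3).re + (-1/2)*(F 2 0).re + (-1/2)*(F 2 2).re + (-1/2)*(F 3 1).re + (1/3)*(F 3 2).im + (-1/6)*(F 3 3).re)) * hs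
    have t_d1 : 1*(F 0 0).im + -1*(F 1 1).im + -1*(F 2 2).im + 1*(F 3 3).im = 0 := by
      linear_combination ((-58087/3718) + (-4267414/16731)*Real.sqrt 3) * sk0 + ((-668691/3718) + (-516775/11154)*Real.sqrt 3) * sk1 + ((-948803/3718) + (-216509/3718)*Real.sqrt 3) * sk2 + ((105851/11154) + (-466782/1859)*Real.sqrt 3) * sk3 + ((-459907/1859) + (-90524/1859)*Real.sqrt 3) * sk4 + ((56395/429) + (-33547/858)*Real.sqrt 3) * sk5 + ((1404043/11154) + (-346288/5577)*Real.sqrt 3) * sk6 + ((31349/143) + (-21531/286)*Real.sqrt 3) * sk7 + ((2032226/16731) + (-4454707/16731)*Real.sqrt 3) * sk8 + ((-13/11) + (-4/11)*Real.sqrt 3) * sk9 + ((246501/1859) + (-204167/1859)*Real.sqrt 3) * sk10 + ((-23299/143) + (18485/429)*Real.sqrt 3) * sk11 + ((-31023/286) + (-4904/429)*Real.sqrt 3) * sk12 + ((-9181/143) + (11643/286)*Real.sqrt 3) * sk13 + ((78931/169) + (-6710/169)*Real.sqrt 3) * sk14 + ((-93365/429) + (126743/858)*Real.sqrt 3) *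 sk15 + ((384499/178464) + (-93091/133848)*Real.sqrt 3) * e4 + ((-697/15444) + (-35287/61776)*Real.sqrt 3) * e5 + ((-211343/146016) + (-1691/4563)*Real.sqrt 3) * e6 + ((6745/15444) + (379/61776)*Real.sqrt 3) * e7 + ((334078/50193) + (58633/66924)*Real.sqrt 3) * e10 + ((4531/2574) + (401/7722)*Real.sqrt 3) * e11 + ((391867/552123) + (207257/552123)*Real.sqrt 3) * e12 + ((2887/7722) + (-1333/15444)*Real.sqrt 3) * e13 + ((-6991/7722) + (6895/15444)*Real.sqrt 3) * e15 + ((-280/429) + (875/2574)*Real.sqrt 3) * e17 + ((29776/16731) + (71164/50193)*Real.sqrt 3) * e18 + ((1/33) + (2/33)*Real.sqrt 3) * e20 + (-((6184505/122694)*(F 0 0).re + (1915399/50193)*Real.sqrt 3*(F 0 0).re + (-6440/1287)*Real.sqrt 3^2*(F 0 0).re + (7000/1287)*Real.sqrt 3^3*(F 0 0).re + (-3217/429)*(F 0 0).im + (-17500/1287)*Real.sqrt 3*(F 0 0).im + (2227295/61347)*(F 0 1).re + (504796/50193)*Real.sqrt 3*(F 0 1).re + (11818/1287)*(F 0 1).im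 + (-35560/1287)*Real.sqrt 3*(F 0 1).im + (6440/1287)*Real.sqrt 3^2*(F 0 1).im + (-7000/1287)*Real.sqrt 3^3*(F 0 1).im + (430517/33462)*(F 0 2).re + (1966918/50193)*Real.sqrt 3*(F 0 2).re + (-6440/1287)*Real.sqrt 3^2*(F 0 2).re + (7000/1287)*Real.sqrt 3^3*(F 0 2).re + (7016/429)*(F 0 2).im + (-5393/429)*Real.sqrt 3*(F 0 2).im + (2600480/552123)*(F 0 3).re + (134260/3861)*Real.sqrt 3*(F 0 3).re + (-6440/1287)*Real.sqrt 3^2*(F 0 3).re + (7000/1287)*Real.sqrt 3^3*(F 0 3).re + (-3529/429)*(F 0 3).im + (-17500/1287)*Real.sqrt 3*(F 0 3).im + (355661/5577)*(F 1 0).re + (-5797108/552123)*Real.sqrt 3*(F 1 0).re + (6580/3861)*Real.sqrt 3^2*(F 1 0).re + (-5182/1287)*(F 1 0).im + (24593/1287)*Real.sqrt 3*(F 1 0).im + (1120/99)*Real.sqrt 3^2*(F 1 0).im + (7000/1287)*Real.sqrt 3^3*(F 1 0).im + (739187/33462)*(F 1 1).re + (218459/61347)*Real.sqrt 3*(F 1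 1).re + (1120/99)*Real.sqrt 3^2*(F 1 1).re + (7000/1287)*Real.sqrt 3^3*(F 1 1).re + (3217/429)*(F 1 1).im + (6020/429)*Real.sqrt 3*(F 1 1).im + (7000/1287)*Real.sqrt 3^2*(F 1 1).im + (-1444706/16731)*(F 1 2).re + (875/429)*Real.sqrt 3*(F 1 2).re + (-7000/1287)*Real.sqrt 3^2*(F 1 2).re + (-2870/143)*(F 1 2).im + (83648/3861)*Real.sqrt 3*(F 1 2).im + (16100/3861)*Real.sqrt 3^2*(F 1 2).im + (7000/1287)*Real.sqrt 3^3*(F 1 2).im + (8101/286)*(F 1 3).re + (-15618436/552123)*Real.sqrt 3*(F 1 3).re + (6580/3861)*Real.sqrt 3^2*(F 1 3).re + (2630/143)*(F 1 3).im + (8324/429)*Real.sqrt 3*(F 1 3).im + (1120/99)*Real.sqrt 3^2*(F 1 3).im + (7000/1287)*Real.sqrt 3^3*(F 1 3).im + (-6023861/368082)*(F 2 0).re + (302782/5577)*Real.sqrt 3*(F 2 0).re + (-6841348/552123)*Real.sqrt 3^2*(F 2 0).re + (7000/1287)*Real.sqrt 3^3*(F 2 0).re + (-938/13)*(F 2 0).im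 + (2806/429)*Real.sqrt 3*(F 2 0).im + (-14000/1287)*Real.sqrt 3^2*(F 2 0).im + (-14895346/184041)*(F 2 1).re + (2650447/50193)*Real.sqrt 3*(F 2 1).re + (-9322112/552123)*Real.sqrt 3^2*(F 2 1).re + (2870/143)*(F 2 1).im + (-160544/3861)*Real.sqrt 3*(F 2 1).im + (24652/3861)*Real.sqrt 3^2*(F 2 1).im + (-7000/1287)*Real.sqrt 3^3*(F 2 1).im + (143593/3042)*(F 2 2).re + (1172839/16731)*Real.sqrt 3*(F 2 2).re + (-6440/1287)*Real.sqrt 3^2*(F 2 2).re + (7000/1287)*Real.sqrt 3^3*(F 2 2).re + (3217/429)*(F 2 2).im + (140/11)*Real.sqrt 3*(F 2 2).im + (-14000/1287)*Real.sqrt 3^2*(F 2 2).im + (-7325477/61347)*(F 2 3).re + (328268/16731)*Real.sqrt 3*(F 2 3).re + (-6841348/552123)*Real.sqrt 3^2*(F 2 3).re + (7000/1287)*Real.sqrt 3^3*(F 2 3).re + (-91946/1287)*(F 2 3).im + (39961/1287)*Real.sqrt 3*(F 2 3).im + (-14000/1287)*Real.sqrt 3^2*(F 2 3).im + (-3295168/552123)*(F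 3 0).re + (18507596/552123)*Real.sqrt 3*(F 3 0).re + (-1068112/50193)*Real.sqrt 3^2*(F 3 0).re + (7000/1287)*Real.sqrt 3^3*(F 3 0).re + (-3269/429)*(F 3 0).im + (-17252/1287)*Real.sqrt 3*(F 3 0).im + (7000/1287)*Real.sqrt 3^2*(F 3 0).im + (-2537219/122694)*(F 3 1).re + (-760444/552123)*Real.sqrt 3*(F 3 1).re + (-816952/50193)*Real.sqrt 3^2*(F 3 1).re + (-5756/429)*(F 3 1).im + (-2309/143)*Real.sqrt 3*(F 3 1).im + (-560/1287)*Real.sqrt 3^2*(F 3 1).im + (-7000/1287)*Real.sqrt 3^3*(F 3 1).im + (-623047/5577)*(F 3 2).re + (1413856/50193)*Real.sqrt 3*(F 3 2).re + (-1116784/50193)*Real.sqrt 3^2*(F 3 2).re + (7000/1287)*Real.sqrt 3^3*(F 3 2).re + (20366/1287)*(F 3 2).im + (-17564/1287)*Real.sqrt 3*(F 3 2).im + (5752/1287)*Real.sqrt 3^2*(F 3 2).im + (15472283/368082)*(F 3 3).re + (980393/61347)*Real.sqrt 3*(F 3 3).re + (560/1287)*Real.sqrt 3^2*(F 3 3).re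 + (7000/1287)*Real.sqrt 3^3*(F 3 3).re + (-3217/429)*(F 3 3).im + (-1540/117)*Real.sqrt 3*(F 3 3).im + (7000/1287)*Real.sqrt 3^2*(F 3 3).im)) * hs
    have t_d2 : 1*(F 0 0).im + -3*(F 1 1).im + 3*(F 2 2).im + -1*(F 3 3).im = 0 := by
      linear_combination ((1273/78) + (473/39)*Real.sqrt 3) * sk0 + ((503/26) + (157/26)*Real.sqrt 3) * sk1 + ((591/26) + (135/26)*Real.sqrt 3) * sk2 + ((395/26) + (484/39)*Real.sqrt 3) * sk3 + ((151/13) + (76/13)*Real.sqrt 3) * sk4 + ((-1/6)*Real.sqrt 3) * sk5 + ((95/26) + (-107/78)*Real.sqrt 3) * sk6 + (-3*Real.sqrt 3) * sk7 + ((152/13) + (1127/117)*Real.sqrt 3) * sk8 + (1) * sk9 + ((165/26) + (-32/13)*Real.sqrt 3) * sk10 + ((1/2)) * sk11 + ((11/2) + (5/2)*Real.sqrt 3) * sk12 + (-3*Real.sqrt 3) * sk13 + ((-87/13) + (-131/13)*Real.sqrt 3) * sk14 + ((-1/6)*Real.sqrt 3) * sk15 + ((-19/1248) + (-31/1248)*Real.sqrt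 3) * e4 + ((19/864)*Real.sqrt 3) * e5 + ((251/3744) + (413/11232)*Real.sqrt 3) * e6 + ((-19/864)*Real.sqrt 3) * e7 + ((-257/468) + (-77/1404)*Real.sqrt 3) * e10 + ((-5/36)) * e11 + ((34/1287) + (-571/7722)*Real.sqrt 3) * e12 + ((-1/108)*Real.sqrt 3) * e13 + ((1/108)*Real.sqrt 3) * e15 + ((-17/117) + (-10/117)*Real.sqrt 3) * e18 + (-((-17675/2574)*(F 0 0).re + (-148/117)*Real.sqrt 3*(F 0 0).re + (1/3)*(F 0 0).im + (-2273/429)*(F 0 1).re + (-160/117)*Real.sqrt 3*(F 0 1).re + (-95/78)*(F 0 2).re + (-413/234)*Real.sqrt 3*(F 0 2).re + (-1/2)*Real.sqrt 3*(F 0 2).im + (-2284/429)*(F 0 3).re + (4/27)*Real.sqrt 3*(F 0 3).re + (1/3)*(F 0 3).im + -3*(F 1 0).re + (-4568/1287)*Real.sqrt 3*(F 1 0).re + (4/27)*Real.sqrt 3^2*(F 1 0).re + (-1/9)*Real.sqrt 3*(F 1 0).im + (-113/78)*(F 1 1).re + (-1409/429)*Real.sqrt 3*(F 1 1).re + -1*(F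 1 1).im + (80/39)*(F 1 2).re + (1/3)*Real.sqrt 3*(F 1 2).re + (-2/3)*(F 1 2).im + (-4/27)*Real.sqrt 3^2*(F 1 2).im + (-11/6)*(F 1 3).re + (-1531/858)*Real.sqrt 3*(F 1 3).re + (4/27)*Real.sqrt 3^2*(F 1 3).re + (-7/6)*Real.sqrt 3*(F 1 3).im + (37/286)*(F 2 0).re + (-55/18)*Real.sqrt 3*(F 2 0).re + (148/143)*Real.sqrt 3^2*(F 2 0).re + (7/6)*Real.sqrt 3*(F 2 0).im + (1084/429)*(F 2 1).re + (-257/117)*Real.sqrt 3*(F 2 1).re + (4568/3861)*Real.sqrt 3^2*(F 2 1).re + (2/3)*(F 2 1).im + (4/27)*Real.sqrt 3^2*(F 2 1).im + (-67/26)*(F 2 2).re + (-148/39)*Real.sqrt 3*(F 2 2).re + 1*(F 2 2).im + (387/143)*(F 2 3).re + (262/117)*Real.sqrt 3*(F 2 3).re + (148/143)*Real.sqrt 3^2*(F 2 3).re + (1/9)*Real.sqrt 3*(F 2 3).im + (-1910/429)*(F 3 0).re + (-5404/3861)*Real.sqrt 3*(F 3 0).re + (160/117)*Real.sqrt 3^2*(F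 3 0).re + (-1/3)*(F 3 0).im + (-683/286)*(F 3 1).re + (-569/858)*Real.sqrt 3*(F 3 1).re + (160/117)*Real.sqrt 3^2*(F 3 1).re + (1/2)*Real.sqrt 3*(F 3 1).im + (121/39)*(F 3 2).re + (-8/117)*Real.sqrt 3*(F 3 2).re + (160/117)*Real.sqrt 3^2*(F 3 2).re + (-5569/858)*(F 3 3).re + (-1409/1287)*Real.sqrt 3*(F 3 3).re + (-1/3)*(F 3 3).im)) * hs
    have hFeq : F = (((F 1 1).im + (F 2 2).im)/2) • (Complex.I • (1 : Matrix (Fin 4) (Fin 4) ℂ))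
        + (2*(F 0 1).im*Real.sqrt 3/3) • Sx4
        + (-(2*(F 0 1).re)*Real.sqrt 3/3) • Sy4
        + ((F 0 0).im - (F 1 1).im) • Sz4 := by
      rw [hI1, hSxE, hSyE, hSzE]
      funext i j
      fin_cases i <;> fin_cases j <;>
        simp only [Matrix.add_apply, Matrix.smul_apply, smul_eq_mul, Complex.real_smul,
          Matrix.cons_val', Matrix.cons_val_zero, Matrix.cons_val_one, Matrix.cons_val_two,
          Matrix.cons_val_three, Matrix.head_cons, Matrix.tail_cons, Matrix.head_fin_const,
          Matrix.empty_val', Matrix.cons_val_fin_one, Matrix.of_apply, Fin.isValue,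
          Fin.reduceFinMk, Fin.zero_eta, Fin.mk_one]
      · show F 0 0 = _
        apply Complex.ext
        · simp only [Complex.add_re, Complex.add_im, Complex.mul_re, Complex.mul_im,
            Complex.ofReal_re, Complex.ofReal_im, Complex.I_re, Complex.I_im,
            Complex.neg_re, Complex.neg_im, Complex.one_re, Complex.one_im,
            Complex.zero_re, Complex.zero_im, mul_zero, zero_mul, mul_one, one_mul,
            add_zero, zero_add, neg_zero, neg_neg, mul_neg, neg_mul]
          linear_combination sk0
        · simp only [Complex.add_re, Complex.add_im, Complex.mul_re, Complex.mul_im,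
            Complex.ofReal_re, Complex.ofReal_im, Complex.I_re, Complex.I_im,
            Complex.neg_re, Complex.neg_im, Complex.one_re, Complex.one_im,
            Complex.zero_re, Complex.zero_im, mul_zero, zero_mul, mul_one, one_mul,
            add_zero, zero_add, neg_zero, neg_neg, mul_neg, neg_mul]
          linear_combination (-(1/4))*t_d1 + (-(1/4))*t_d2
      · show F 0 1 = _
        apply Complex.ext
        · simp only [Complex.add_re, Complex.add_im, Complex.mul_re, Complex.mul_im,
            Complex.ofReal_re, Complex.ofReal_im, Complex.I_re, Complex.I_im,
            Complex.neg_re, Complex.neg_im, Complex.one_re, Complex.one_im,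
            Complex.zero_re, Complex.zero_im, mul_zero, zero_mul, mul_one, one_mul,
            add_zero, zero_add, neg_zero, neg_neg, mul_neg, neg_mul]
          linear_combination (-(1/3)*(F 0 1).re)*hs
        · simp only [Complex.add_re, Complex.add_im, Complex.mul_re, Complex.mul_im,
            Complex.ofReal_re, Complex.ofReal_im, Complex.I_re, Complex.I_im,
            Complex.neg_re, Complex.neg_im, Complex.one_re, Complex.one_im,
            Complex.zero_re, Complex.zero_im, mul_zero, zero_mul, mul_one, one_mul,
            add_zero, zero_add, neg_zero, neg_neg, mul_neg, neg_mul]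
          linear_combination (-(1/3)*(F 0 1).im)*hs
      · show F 0 2 = _
        apply Complex.ext
        · simp only [Complex.add_re, Complex.add_im, Complex.mul_re, Complex.mul_im,
            Complex.ofReal_re, Complex.ofReal_im, Complex.I_re, Complex.I_im,
            Complex.neg_re, Complex.neg_im, Complex.one_re, Complex.one_im,
            Complex.zero_re, Complex.zero_im, mul_zero, zero_mul, mul_one, one_mul,
            add_zero, zero_add, neg_zero, neg_neg, mul_neg, neg_mul]
          linear_combination t_x02
        · simp only [Complex.add_re, Complex.add_im, Complex.mul_re, Complex.mul_im,
            Complex.ofReal_re, Complex.ofReal_im, Complex.I_re, Complex.I_im,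
            Complex.neg_re, Complex.neg_im, Complex.one_re, Complex.one_im,
            Complex.zero_re, Complex.zero_im, mul_zero, zero_mul, mul_one, one_mul,
            add_zero, zero_add, neg_zero, neg_neg, mul_neg, neg_mul]
          linear_combination t_y02
      · show F 0 3 = _
        apply Complex.ext
        · simp only [Complex.add_re, Complex.add_im, Complex.mul_re, Complex.mul_im,
            Complex.ofReal_re, Complex.ofReal_im, Complex.I_re, Complex.I_im,
            Complex.neg_re, Complex.neg_im, Complex.one_re, Complex.one_im,
            Complex.zero_re, Complex.zero_im, mul_zero, zero_mul, mul_one, one_mul,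
            add_zero, zero_add, neg_zero, neg_neg, mul_neg, neg_mul]
          linear_combination t_x03
        · simp only [Complex.add_re, Complex.add_im, Complex.mul_re, Complex.mul_im,
            Complex.ofReal_re, Complex.ofReal_im, Complex.I_re, Complex.I_im,
            Complex.neg_re, Complex.neg_im, Complex.one_re, Complex.one_im,
            Complex.zero_re, Complex.zero_im, mul_zero, zero_mul, mul_one, one_mul,
            add_zero, zero_add, neg_zero, neg_neg, mul_neg, neg_mul]
          linear_combination t_y03
      · show F 1 0 = _
        apply Complex.ext
        · simp only [Complex.add_re, Complex.add_im, Complex.mul_re, Complex.mul_im,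
            Complex.ofReal_re, Complex.ofReal_im, Complex.I_re, Complex.I_im,
            Complex.neg_re, Complex.neg_im, Complex.one_re, Complex.one_im,
            Complex.zero_re, Complex.zero_im, mul_zero, zero_mul, mul_one, one_mul,
            add_zero, zero_add, neg_zero, neg_neg, mul_neg, neg_mul]
          linear_combination sk4 + ((1/3)*(F 0 1).re)*hs
        · simp only [Complex.add_re, Complex.add_im, Complex.mul_re, Complex.mul_im,
            Complex.ofReal_re, Complex.ofReal_im, Complex.I_re, Complex.I_im,
            Complex.neg_re, Complex.neg_im, Complex.one_re, Complex.one_im,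
            Complex.zero_re, Complex.zero_im, mul_zero, zero_mul, mul_one, one_mul,
            add_zero, zero_add, neg_zero, neg_neg, mul_neg, neg_mul]
          linear_combination sk5 + (-(1/3)*(F 0 1).im)*hs
      · show F 1 1 = _
        apply Complex.ext
        · simp only [Complex.add_re, Complex.add_im, Complex.mul_re, Complex.mul_im,
            Complex.ofReal_re, Complex.ofReal_im, Complex.I_re, Complex.I_im,
            Complex.neg_re, Complex.neg_im, Complex.one_re, Complex.one_im,
            Complex.zero_re, Complex.zero_im, mul_zero, zero_mul, mul_one, one_mul,
            add_zero, zero_add, neg_zero, neg_neg, mul_neg, neg_mul]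
          linear_combination sk1
        · simp only [Complex.add_re, Complex.add_im, Complex.mul_re, Complex.mul_im,
            Complex.ofReal_re, Complex.ofReal_im, Complex.I_re, Complex.I_im,
            Complex.neg_re, Complex.neg_im, Complex.one_re, Complex.one_im,
            Complex.zero_re, Complex.zero_im, mul_zero, zero_mul, mul_one, one_mul,
            add_zero, zero_add, neg_zero, neg_neg, mul_neg, neg_mul]
          linear_combination (-(1/4))*t_d1 + (-(1/4))*t_d2
      · show F 1 2 = _
        apply Complex.ext
        · simp only [Complex.add_re, Complex.add_im, Complex.mul_re, Complex.mul_im,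
            Complex.ofReal_re, Complex.ofReal_im, Complex.I_re, Complex.I_im,
            Complex.neg_re, Complex.neg_im, Complex.one_re, Complex.one_im,
            Complex.zero_re, Complex.zero_im, mul_zero, zero_mul, mul_one, one_mul,
            add_zero, zero_add, neg_zero, neg_neg, mul_neg, neg_mul]
          linear_combination (1/3)*t_x12
        · simp only [Complex.add_re, Complex.add_im, Complex.mul_re, Complex.mul_im,
            Complex.ofReal_re, Complex.ofReal_im, Complex.I_re, Complex.I_im,
            Complex.neg_re, Complex.neg_im, Complex.one_re, Complex.one_im,
            Complex.zero_re, Complex.zero_im, mul_zero, zero_mul, mul_one, one_mul,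
            add_zero, zero_add, neg_zero, neg_neg, mul_neg, neg_mul]
          linear_combination (1/3)*t_y12
      · show F 1 3 = _
        apply Complex.ext
        · simp only [Complex.add_re, Complex.add_im, Complex.mul_re, Complex.mul_im,
            Complex.ofReal_re, Complex.ofReal_im, Complex.I_re, Complex.I_im,
            Complex.neg_re, Complex.neg_im, Complex.one_re, Complex.one_im,
            Complex.zero_re, Complex.zero_im, mul_zero, zero_mul, mul_one, one_mul,
            add_zero, zero_add, neg_zero, neg_neg, mul_neg, neg_mul]
          linear_combination t_x13
        · simp only [Complex.add_re, Complex.add_im, Complex.mul_re, Complex.mul_im,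
            Complex.ofReal_re, Complex.ofReal_im, Complex.I_re, Complex.I_im,
            Complex.neg_re, Complex.neg_im, Complex.one_re, Complex.one_im,
            Complex.zero_re, Complex.zero_im, mul_zero, zero_mul, mul_one, one_mul,
            add_zero, zero_add, neg_zero, neg_neg, mul_neg, neg_mul]
          linear_combination t_y13
      · show F 2 0 = _
        apply Complex.ext
        · simp only [Complex.add_re, Complex.add_im, Complex.mul_re, Complex.mul_im,
            Complex.ofReal_re, Complex.ofReal_im, Complex.I_re, Complex.I_im,
            Complex.neg_re, Complex.neg_im, Complex.one_re, Complex.one_im,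
            Complex.zero_re, Complex.zero_im, mul_zero, zero_mul, mul_one, one_mul,
            add_zero, zero_add, neg_zero, neg_neg, mul_neg, neg_mul]
          linear_combination sk6 - t_x02
        · simp only [Complex.add_re, Complex.add_im, Complex.mul_re, Complex.mul_im,
            Complex.ofReal_re, Complex.ofReal_im, Complex.I_re, Complex.I_im,
            Complex.neg_re, Complex.neg_im, Complex.one_re, Complex.one_im,
            Complex.zero_re, Complex.zero_im, mul_zero, zero_mul, mul_one, one_mul,
            add_zero, zero_add, neg_zero, neg_neg, mul_neg, neg_mul]
          linear_combination sk7 + t_y02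
      · show F 2 1 = _
        apply Complex.ext
        · simp only [Complex.add_re, Complex.add_im, Complex.mul_re, Complex.mul_im,
            Complex.ofReal_re, Complex.ofReal_im, Complex.I_re, Complex.I_im,
            Complex.neg_re, Complex.neg_im, Complex.one_re, Complex.one_im,
            Complex.zero_re, Complex.zero_im, mul_zero, zero_mul, mul_one, one_mul,
            add_zero, zero_add, neg_zero, neg_neg, mul_neg, neg_mul]
          linear_combination sk10 - (1/3)*t_x12
        · simp only [Complex.add_re, Complex.add_im, Complex.mul_re, Complex.mul_im,
            Complex.ofReal_re, Complex.ofReal_im, Complex.I_re, Complex.I_im,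
            Complex.neg_re, Complex.neg_im, Complex.one_re, Complex.one_im,
            Complex.zero_re, Complex.zero_im, mul_zero, zero_mul, mul_one, one_mul,
            add_zero, zero_add, neg_zero, neg_neg, mul_neg, neg_mul]
          linear_combination sk11 + (1/3)*t_y12
      · show F 2 2 = _
        apply Complex.ext
        · simp only [Complex.add_re, Complex.add_im, Complex.mul_re, Complex.mul_im,
            Complex.ofReal_re, Complex.ofReal_im, Complex.I_re, Complex.I_im,
            Complex.neg_re, Complex.neg_im, Complex.one_re, Complex.one_im,
            Complex.zero_re, Complex.zero_im, mul_zero, zero_mul, mul_one, one_mul,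
            add_zero, zero_add, neg_zero, neg_neg, mul_neg, neg_mul]
          linear_combination sk2
        · simp only [Complex.add_re, Complex.add_im, Complex.mul_re, Complex.mul_im,
            Complex.ofReal_re, Complex.ofReal_im, Complex.I_re, Complex.I_im,
            Complex.neg_re, Complex.neg_im, Complex.one_re, Complex.one_im,
            Complex.zero_re, Complex.zero_im, mul_zero, zero_mul, mul_one, one_mul,
            add_zero, zero_add, neg_zero, neg_neg, mul_neg, neg_mul]
          linear_combination (1/4)*t_d1 + (1/4)*t_d2
      · show F 2 3 = _
        apply Complex.ext
        · simp only [Complex.add_re, Complex.add_im, Complex.mul_re, Complex.mul_im,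
            Complex.ofReal_re, Complex.ofReal_im, Complex.I_re, Complex.I_im,
            Complex.neg_re, Complex.neg_im, Complex.one_re, Complex.one_im,
            Complex.zero_re, Complex.zero_im, mul_zero, zero_mul, mul_one, one_mul,
            add_zero, zero_add, neg_zero, neg_neg, mul_neg, neg_mul]
          linear_combination t_x23 + (-(1/3)*(F 0 1).re)*hs
        · simp only [Complex.add_re, Complex.add_im, Complex.mul_re, Complex.mul_im,
            Complex.ofReal_re, Complex.ofReal_im, Complex.I_re, Complex.I_im,
            Complex.neg_re, Complex.neg_im, Complex.one_re, Complex.one_im,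
            Complex.zero_re, Complex.zero_im, mul_zero, zero_mul, mul_one, one_mul,
            add_zero, zero_add, neg_zero, neg_neg, mul_neg, neg_mul]
          linear_combination t_y23 + (-(1/3)*(F 0 1).im)*hs
      · show F 3 0 = _
        apply Complex.ext
        · simp only [Complex.add_re, Complex.add_im, Complex.mul_re, Complex.mul_im,
            Complex.ofReal_re, Complex.ofReal_im, Complex.I_re, Complex.I_im,
            Complex.neg_re, Complex.neg_im, Complex.one_re, Complex.one_im,
            Complex.zero_re, Complex.zero_im, mul_zero, zero_mul, mul_one, one_mul,
            add_zero, zero_add, neg_zero, neg_neg, mul_neg, neg_mul]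
          linear_combination sk8 - t_x03
        · simp only [Complex.add_re, Complex.add_im, Complex.mul_re, Complex.mul_im,
            Complex.ofReal_re, Complex.ofReal_im, Complex.I_re, Complex.I_im,
            Complex.neg_re, Complex.neg_im, Complex.one_re, Complex.one_im,
            Complex.zero_re, Complex.zero_im, mul_zero, zero_mul, mul_one, one_mul,
            add_zero, zero_add, neg_zero, neg_neg, mul_neg, neg_mul]
          linear_combination sk9 + t_y03
      · show F 3 1 = _
        apply Complex.ext
        · simp only [Complex.add_re, Complex.add_im, Complex.mul_re, Complex.mul_im,
            Complex.ofReal_re, Complex.ofReal_im, Complex.I_re, Complex.I_im,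
            Complex.neg_re, Complex.neg_im, Complex.one_re, Complex.one_im,
            Complex.zero_re, Complex.zero_im, mul_zero, zero_mul, mul_one, one_mul,
            add_zero, zero_add, neg_zero, neg_neg, mul_neg, neg_mul]
          linear_combination sk12 - t_x13
        · simp only [Complex.add_re, Complex.add_im, Complex.mul_re, Complex.mul_im,
            Complex.ofReal_re, Complex.ofReal_im, Complex.I_re, Complex.I_im,
            Complex.neg_re, Complex.neg_im, Complex.one_re, Complex.one_im,
            Complex.zero_re, Complex.zero_im, mul_zero, zero_mul, mul_one, one_mul,
            add_zero, zero_add, neg_zero, neg_neg, mul_neg, neg_mul]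
          linear_combination sk13 + t_y13
      · show F 3 2 = _
        apply Complex.ext
        · simp only [Complex.add_re, Complex.add_im, Complex.mul_re, Complex.mul_im,
            Complex.ofReal_re, Complex.ofReal_im, Complex.I_re, Complex.I_im,
            Complex.neg_re, Complex.neg_im, Complex.one_re, Complex.one_im,
            Complex.zero_re, Complex.zero_im, mul_zero, zero_mul, mul_one, one_mul,
            add_zero, zero_add, neg_zero, neg_neg, mul_neg, neg_mul]
          linear_combination sk14 - t_x23 + ((1/3)*(F 0 1).re)*hs
        · simp only [Complex.add_re, Complex.add_im, Complex.mul_re, Complex.mul_im,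
            Complex.ofReal_re, Complex.ofReal_im, Complex.I_re, Complex.I_im,
            Complex.neg_re, Complex.neg_im, Complex.one_re, Complex.one_im,
            Complex.zero_re, Complex.zero_im, mul_zero, zero_mul, mul_one, one_mul,
            add_zero, zero_add, neg_zero, neg_neg, mul_neg, neg_mul]
          linear_combination sk15 + t_y23 + (-(1/3)*(F 0 1).im)*hs
      · show F 3 3 = _
        apply Complex.ext
        · simp only [Complex.add_re, Complex.add_im, Complex.mul_re, Complex.mul_im,
            Complex.ofReal_re, Complex.ofReal_im, Complex.I_re, Complex.I_im,
            Complex.neg_re, Complex.neg_im, Complex.one_re, Complex.one_im,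
            Complex.zero_re, Complex.zero_im, mul_zero, zero_mul, mul_one, one_mul,
            add_zero, zero_add, neg_zero, neg_neg, mul_neg, neg_mul]
          linear_combination sk3
        · simp only [Complex.add_re, Complex.add_im, Complex.mul_re, Complex.mul_im,
            Complex.ofReal_re, Complex.ofReal_im, Complex.I_re, Complex.I_im,
            Complex.neg_re, Complex.neg_im, Complex.one_re, Complex.one_im,
            Complex.zero_re, Complex.zero_im, mul_zero, zero_mul, mul_one, one_mul,
            add_zero, zero_add, neg_zero, neg_neg, mul_neg, neg_mul]
          linear_combination (5/4)*t_d1 + (1/4)*t_d2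
    rw [hFeq]
    refine Submodule.add_mem _ (Submodule.add_mem _ (Submodule.add_mem _ ?_ ?_) ?_) ?_ <;>
      refine Submodule.smul_mem _ _ (Submodule.subset_span ?_) <;>
      simp [Set.mem_insert_iff]
  · rw [Submodule.span_le]
    rintro x hx
    simp only [Set.mem_insert_iff, Set.mem_singleton_iff] at hx
    rcases hx with rfl | rfl | rfl | rfl
    exacts [hI, hx, hy, hz]
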